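/- arXiv:0812.1913 — 5 statements merged into one kernel-verified Lean document; each statement's English description precedes it below -/
import Mathlib

section
/- Let d ≥ 1 be an integer, 0 < α < d, and let f be the Riesz kernel of order α on ℝ^d. Then there is a constant D_{α,d} > 0, depending only on α and d, such that for all u, v > 0 and all y, z ∈ ℝ^d: J_f(u,v,y,z) = ∫_{ℝ^d}∫_{ℝ^d} p_u(x−y) p_v(x'−z) f(x−x') dx dx' ≤ D_{α,d} (u+v)^{−(d−α)/2}. -/
open MeasureTheory

/-- The heat kernel `p_t(x) = (2πt)^{-d/2} exp(-|x|²/(2t))` on `ℝ^d`. -/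
noncomputable def heatKernel (d : ℕ) (t : ℝ) (x : EuclideanSpace ℝ (Fin d)) : ℝ :=
  (2 * Real.pi * t) ^ (-(d : ℝ) / 2) * Real.exp (-‖x‖ ^ 2 / (2 * t))

/-- The Riesz kernel of order `α`:
`f(x) = γ_{α,d} |x|^{α-d}`, `γ_{α,d} = Γ((d-α)/2) 2^{-α} π^{-d/2} / Γ(α/2)`. -/
noncomputable def rieszKernel (d : ℕ) (α : ℝ) (x : EuclideanSpace ℝ (Fin d)) : ℝ :=
  (Real.Gamma (((d : ℝ) - α) / 2) * 2 ^ (-α) * Real.pi ^ (-(d : ℝ) / 2) / Real.Gamma (α / 2))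
    * ‖x‖ ^ (α - (d : ℝ))

/-- `J_f(u,v,y,z) = ∫∫ p_u(x-y) p_v(x'-z) f(x-x') dx dx'` (as a Lebesgue integral in `[0,∞]`). -/
noncomputable def Jf (d : ℕ) (f : EuclideanSpace ℝ (Fin d) → ℝ) (u v : ℝ)
    (y z : EuclideanSpace ℝ (Fin d)) : ENNReal :=
  ∫⁻ x, ∫⁻ x', ENNReal.ofReal (heatKernel d u (x - y) * heatKernel d v (x' - z) * f (x - x'))

open Metric ENNReal Real

lemma measurable_norm_rpow (E : Type*) [NormedAddCommGroup E] [MeasurableSpace E] [BorelSpace E]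
    (e : ℝ) : Measurable fun x : E => ‖x‖ ^ e := by
  have : (fun x : E => ‖x‖ ^ e)
      = fun x => if ‖x‖ = 0 then (0:ℝ) ^ e else Real.exp (Real.log ‖x‖ * e) := by
    funext x
    split_ifs with h
    · rw [h]
    · rw [Real.rpow_def_of_pos (lt_of_le_of_ne (norm_nonneg _) (Ne.symm h))]
  rw [this]
  have hm : Measurable fun x : E => ‖x‖ := continuous_norm.measurable
  exact Measurable.ite (hm (measurableSet_singleton 0)) measurable_const
    (Real.measurable_exp.comp ((Real.measurable_log.comp hm).mul measurable_const))

-- cover lemma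
lemma annuli_mem {R : ℝ} (hR : 0 < R) {s : ℝ} (hs0 : 0 < s) (hsR : s ≤ R) :
    ∃ n : ℕ, R * ((2:ℝ) ^ (n+1))⁻¹ ≤ s ∧ s ≤ R * ((2:ℝ) ^ n)⁻¹ := by
  set q := R / s with hq
  have hq1 : 1 ≤ q := (one_le_div hs0).2 hsR
  have hq0 : 0 < q := lt_of_lt_of_le one_pos hq1
  set n := ⌊Real.logb 2 q⌋₊ with hn
  have hlb : (n : ℝ) ≤ Real.logb 2 q := Nat.floor_le (Real.logb_nonneg one_lt_two hq1)
  have hub : Real.logb 2 q < (n : ℝ) + 1 := Nat.lt_floor_add_one _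
  have h1 : (2:ℝ) ^ (n:ℝ) ≤ q := by
    calc (2:ℝ) ^ (n:ℝ) ≤ (2:ℝ) ^ Real.logb 2 q := Real.rpow_le_rpow_of_exponent_le one_le_two hlb
    _ = q := Real.rpow_logb two_pos (by norm_num) hq0
  have h2 : q ≤ (2:ℝ) ^ ((n:ℝ)+1) := by
    calc q = (2:ℝ) ^ Real.logb 2 q := (Real.rpow_logb two_pos (by norm_num) hq0).symm
    _ ≤ (2:ℝ) ^ ((n:ℝ)+1) := Real.rpow_le_rpow_of_exponent_le one_le_two hub.le
  rw [show ((n:ℝ)+1) = ((n+1 : ℕ) : ℝ) by push_cast; ring] at h2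
  rw [Real.rpow_natCast] at h1 h2
  refine ⟨n, ?_, ?_⟩
  · calc R * ((2:ℝ)^(n+1))⁻¹ ≤ R * q⁻¹ := by
          gcongr
    _ = s := by rw [hq]; field_simp
  · calc s = R * q⁻¹ := by rw [hq]; field_simp
    _ ≤ R * ((2:ℝ)^n)⁻¹ := by
          gcongr

lemma real_annulus_identity {R α : ℝ} (hR : 0 < R) (n : ℕ) (dd : ℝ) :
    (R * ((2:ℝ) ^ (n+1))⁻¹) ^ (α - dd) * (R * ((2:ℝ) ^ n)⁻¹) ^ dd
      = R ^ α * (2:ℝ) ^ (dd - α) * ((2:ℝ) ^ (-α)) ^ n := by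
  have h2 : (0:ℝ) < 2 := two_pos
  have e1 : ((2:ℝ) ^ (n+1))⁻¹ = (2:ℝ) ^ (-(((n:ℝ))+1)) := by
    rw [← Real.rpow_natCast 2 (n+1), ← Real.rpow_neg h2.le]
    push_cast; ring_nf
  have e2 : ((2:ℝ) ^ n)⁻¹ = (2:ℝ) ^ (-(n:ℝ)) := by
    rw [← Real.rpow_natCast 2 n, ← Real.rpow_neg h2.le]
  have e3 : ((2:ℝ) ^ (-α)) ^ n = (2:ℝ) ^ (-α * n) := by
    rw [← Real.rpow_natCast ((2:ℝ)^(-α)) n, ← Real.rpow_mul h2.le]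
  rw [e1, e2, e3, Real.mul_rpow hR.le (by positivity), Real.mul_rpow hR.le (by positivity),
    ← Real.rpow_mul h2.le, ← Real.rpow_mul h2.le]
  rw [show (R ^ (α - dd) * (2:ℝ) ^ (-((n:ℝ)+1) * (α - dd))) * (R ^ dd * (2:ℝ) ^ (-(n:ℝ) * dd))
      = (R ^ (α - dd) * R ^ dd) * ((2:ℝ) ^ (-((n:ℝ)+1) * (α - dd)) * (2:ℝ) ^ (-(n:ℝ) * dd)) by ring,
    ← Real.rpow_add hR, ← Real.rpow_add h2, sub_add_cancel,
    show -((n:ℝ)+1) * (α - dd) + -(n:ℝ) * dd = (dd - α) + (-α * n) by ring,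
    Real.rpow_add h2, mul_assoc]

lemma ball_riesz_bound (d : ℕ) (hd : 1 ≤ d) (α : ℝ) (hα0 : 0 < α) (hαd : α < d) :
    ∃ C : ℝ≥0∞, C ≠ ∞ ∧ ∀ R : ℝ, 0 < R →
      ∫⁻ y in closedBall (0 : EuclideanSpace ℝ (Fin d)) R, ENNReal.ofReal (‖y‖ ^ (α - (d:ℝ)))
        ≤ C * ENNReal.ofReal (R ^ α) := by
  haveI : NeZero d := ⟨by omega⟩
  set Vc : ℝ≥0∞ := volume (ball (0 : EuclideanSpace ℝ (Fin d)) 1) with hVc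
  have hVc_fin : Vc ≠ ∞ := measure_ball_lt_top.ne
  set r0 : ℝ≥0∞ := ENNReal.ofReal ((2:ℝ) ^ (-α)) with hr0
  have hr0lt : r0 < 1 := by
    rw [hr0, ← ENNReal.ofReal_one]
    exact ENNReal.ofReal_lt_ofReal_iff_of_nonneg (by positivity) |>.2
      (Real.rpow_lt_one_of_one_lt_of_neg one_lt_two (by linarith))
  refine ⟨ENNReal.ofReal ((2:ℝ) ^ ((d:ℝ) - α)) * ((1 - r0)⁻¹ * Vc), ?_, ?_⟩
  · refine ENNReal.mul_ne_top ENNReal.ofReal_ne_top (ENNReal.mul_ne_top ?_ hVc_fin)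
    rw [Ne, ENNReal.inv_eq_top]
    exact (tsub_pos_of_lt hr0lt).ne'
  intro R hR
  set A : ℕ → Set (EuclideanSpace ℝ (Fin d)) := fun n =>
    {y | R * ((2:ℝ) ^ (n+1))⁻¹ ≤ ‖y‖} ∩ closedBall 0 (R * ((2:ℝ) ^ n)⁻¹) with hA
  have hAmeas : ∀ n, MeasurableSet (A n) := fun n =>
    (measurableSet_le measurable_const measurable_norm).inter measurableSet_closedBall
  have cover : closedBall (0 : EuclideanSpace ℝ (Fin d)) R ⊆ {0} ∪ ⋃ n, A n := by
    intro y hy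
    rcases eq_or_ne y 0 with h0 | h0
    · exact Or.inl h0
    · have hy0 : 0 < ‖y‖ := norm_pos_iff.2 h0
      have hyR : ‖y‖ ≤ R := mem_closedBall_zero_iff.1 hy
      obtain ⟨n, h1, h2⟩ := annuli_mem hR hy0 hyR
      exact Or.inr (Set.mem_iUnion.2 ⟨n, h1, mem_closedBall_zero_iff.2 h2⟩)
  calc ∫⁻ y in closedBall (0 : EuclideanSpace ℝ (Fin d)) R, ENNReal.ofReal (‖y‖ ^ (α - (d:ℝ)))
      ≤ ∫⁻ y in ({0} ∪ ⋃ n, A n : Set (EuclideanSpace ℝ (Fin d))),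
          ENNReal.ofReal (‖y‖ ^ (α - (d:ℝ))) := lintegral_mono_set cover
    _ ≤ (∫⁻ y in ({0} : Set (EuclideanSpace ℝ (Fin d))), ENNReal.ofReal (‖y‖ ^ (α - (d:ℝ))))
        + ∫⁻ y in (⋃ n, A n), ENNReal.ofReal (‖y‖ ^ (α - (d:ℝ))) := lintegral_union_le _ _ _
    _ = ∫⁻ y in (⋃ n, A n), ENNReal.ofReal (‖y‖ ^ (α - (d:ℝ))) := by
        rw [setLIntegral_measure_zero _ _ (measure_singleton 0), zero_add]
    _ ≤ ∑' n, ∫⁻ y in A n, ENNReal.ofReal (‖y‖ ^ (α - (d:ℝ))) := lintegral_iUnion_le _ _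
    _ ≤ ∑' n, ENNReal.ofReal ((R * ((2:ℝ) ^ (n+1))⁻¹) ^ (α - (d:ℝ)))
          * (ENNReal.ofReal ((R * ((2:ℝ) ^ n)⁻¹) ^ (d:ℝ)) * Vc) := by
        refine ENNReal.tsum_le_tsum fun n => ?_
        have hb : (0:ℝ) < R * ((2:ℝ) ^ (n+1))⁻¹ := by positivity
        calc ∫⁻ y in A n, ENNReal.ofReal (‖y‖ ^ (α - (d:ℝ)))
            ≤ ∫⁻ _ in A n, ENNReal.ofReal ((R * ((2:ℝ) ^ (n+1))⁻¹) ^ (α - (d:ℝ))) := by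
              refine setLIntegral_mono' (hAmeas n) fun y hy => ?_
              exact ENNReal.ofReal_le_ofReal
                (Real.rpow_le_rpow_of_nonpos hb hy.1 (by linarith))
          _ = ENNReal.ofReal ((R * ((2:ℝ) ^ (n+1))⁻¹) ^ (α - (d:ℝ))) * volume (A n) :=
              setLIntegral_const _ _
          _ ≤ ENNReal.ofReal ((R * ((2:ℝ) ^ (n+1))⁻¹) ^ (α - (d:ℝ)))
              * (ENNReal.ofReal ((R * ((2:ℝ) ^ n)⁻¹) ^ (d:ℝ)) * Vc) := by
              gcongr
              calc volume (A n) ≤ volume (closedBall (0 : EuclideanSpace ℝ (Fin d))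
                    (R * ((2:ℝ) ^ n)⁻¹)) := measure_mono Set.inter_subset_right
                _ = ENNReal.ofReal ((R * ((2:ℝ) ^ n)⁻¹) ^ (d:ℝ)) * Vc := by
                    rw [Measure.addHaar_closedBall _ _ (by positivity), hVc,
                      finrank_euclideanSpace_fin, ← Real.rpow_natCast (R * ((2:ℝ)^n)⁻¹) d]
    _ = ∑' n, ENNReal.ofReal (R ^ α * (2:ℝ) ^ ((d:ℝ) - α) * ((2:ℝ) ^ (-α)) ^ n) * Vc := by
        congr 1; funext n
        rw [← mul_assoc, ← ENNReal.ofReal_mul (by positivity),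
          real_annulus_identity hR n (d:ℝ)]
    _ = ENNReal.ofReal (R ^ α) * ENNReal.ofReal ((2:ℝ) ^ ((d:ℝ) - α)) * ((1 - r0)⁻¹ * Vc) := by
        simp_rw [ENNReal.ofReal_mul (by positivity : (0:ℝ) ≤ R ^ α * (2:ℝ) ^ ((d:ℝ)-α)),
          ENNReal.ofReal_mul (by positivity : (0:ℝ) ≤ R ^ α),
          ENNReal.ofReal_pow (by positivity : (0:ℝ) ≤ (2:ℝ) ^ (-α))]
        rw [ENNReal.tsum_mul_right, ENNReal.tsum_mul_left, ← hr0, ENNReal.tsum_geometric]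
        ring
    _ = ENNReal.ofReal ((2:ℝ) ^ ((d:ℝ) - α)) * ((1 - r0)⁻¹ * Vc) * ENNReal.ofReal (R ^ α) := by
        ring

lemma heatKernel_nonneg (d : ℕ) {t : ℝ} (ht : 0 < t) (x : EuclideanSpace ℝ (Fin d)) :
    0 ≤ heatKernel d t x := by
  unfold heatKernel; positivity

lemma integrable_gauss (d : ℕ) {b : ℝ} (hb : 0 < b) :
    Integrable (fun x : EuclideanSpace ℝ (Fin d) => Real.exp (-b * ‖x‖ ^ 2)) := by
  have h := GaussianFourier.integrable_cexp_neg_mul_sq_norm_add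
    (V := EuclideanSpace ℝ (Fin d)) (b := (b:ℂ)) (by simpa using hb) 0 0
  have h2 := h.norm
  refine h2.congr (Filter.Eventually.of_forall fun x => ?_)
  simp only [zero_mul, add_zero, Complex.norm_exp]
  norm_num
  left
  norm_cast

lemma heat_lintegral (d : ℕ) {t : ℝ} (ht : 0 < t) :
    ∫⁻ x : EuclideanSpace ℝ (Fin d), ENNReal.ofReal (heatKernel d t x) = 1 := by
  have hb : 0 < 1 / (2 * t) := by positivity
  have hrw : ∀ x : EuclideanSpace ℝ (Fin d),
      heatKernel d t x = (2 * Real.pi * t) ^ (-(d:ℝ)/2) * Real.exp (-(1/(2*t)) * ‖x‖ ^ 2) := by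
    intro x
    unfold heatKernel
    have : -‖x‖ ^ 2 / (2 * t) = -(1/(2*t)) * ‖x‖ ^ 2 := by ring
    rw [this]
  simp_rw [hrw]
  simp_rw [ENNReal.ofReal_mul (by positivity : (0:ℝ) ≤ (2 * Real.pi * t) ^ (-(d:ℝ)/2))]
  rw [lintegral_const_mul' _ _ ENNReal.ofReal_ne_top,
    ← ofReal_integral_eq_lintegral_ofReal (integrable_gauss d hb)
      (Filter.Eventually.of_forall fun x => (Real.exp_pos _).le)]
  have hint : ∫ x : EuclideanSpace ℝ (Fin d), Real.exp (-(1/(2*t)) * ‖x‖ ^ 2)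
      = (2 * Real.pi * t) ^ ((d:ℝ)/2) := by
    have := GaussianFourier.integral_rexp_neg_mul_sq_norm
      (V := EuclideanSpace ℝ (Fin d)) hb
    rw [this, finrank_euclideanSpace_fin]
    congr 1
    field_simp
  rw [hint, ← ENNReal.ofReal_mul (by positivity), ← Real.rpow_add (by positivity)]
  rw [neg_div, neg_add_cancel, Real.rpow_zero, ENNReal.ofReal_one]

lemma lintegral_closedBall_sub (d : ℕ) (R : ℝ) (e : ℝ) (b : EuclideanSpace ℝ (Fin d)) :
    ∫⁻ x in closedBall b R, ENNReal.ofReal (‖x - b‖ ^ e)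
      = ∫⁻ y in closedBall (0 : EuclideanSpace ℝ (Fin d)) R, ENNReal.ofReal (‖y‖ ^ e) := by
  have h := lintegral_add_right_eq_self (μ := volume)
    ((closedBall (0 : EuclideanSpace ℝ (Fin d)) R).indicator fun y => ENNReal.ofReal (‖y‖ ^ e)) (-b)
  rw [← lintegral_indicator measurableSet_closedBall,
    ← lintegral_indicator measurableSet_closedBall, ← h]
  congr 1
  funext x
  classical
  rw [Set.indicator_apply, Set.indicator_apply]
  have hmem : x + -b ∈ closedBall (0 : EuclideanSpace ℝ (Fin d)) R ↔ x ∈ closedBall b R := by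
    rw [mem_closedBall_zero_iff, mem_closedBall_iff_norm, sub_eq_add_neg]
  by_cases hx : x ∈ closedBall b R
  · rw [if_pos hx, if_pos (hmem.2 hx), sub_eq_add_neg]
  · rw [if_neg hx, if_neg (fun h => hx (hmem.1 h))]

lemma heat_riesz_bound (d : ℕ) (hd : 1 ≤ d) (α : ℝ) (hα0 : 0 < α) (hαd : α < d) :
    ∃ K : ℝ≥0∞, K ≠ ∞ ∧ ∀ t : ℝ, 0 < t → ∀ b c : EuclideanSpace ℝ (Fin d),
      ∫⁻ x, ENNReal.ofReal (heatKernel d t (x - c) * ‖x - b‖ ^ (α - (d:ℝ)))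
        ≤ K * ENNReal.ofReal (t ^ ((α - (d:ℝ))/2)) := by
  obtain ⟨C, hCfin, hC⟩ := ball_riesz_bound d hd α hα0 hαd
  refine ⟨1 + ENNReal.ofReal ((2*Real.pi) ^ (-(d:ℝ)/2)) * C,
    ENNReal.add_ne_top.2 ⟨ENNReal.one_ne_top, ENNReal.mul_ne_top ENNReal.ofReal_ne_top hCfin⟩, ?_⟩
  intro t ht b c
  have hdα : α - (d:ℝ) < 0 := by
    have : (α:ℝ) < (d:ℝ) := hαd
    linarith
  have hst : 0 < Real.sqrt t := Real.sqrt_pos.2 ht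
  have hsq : ∀ β : ℝ, Real.sqrt t ^ β = t ^ (β/2) := by
    intro β
    rw [Real.sqrt_eq_rpow, ← Real.rpow_mul ht.le, one_div, inv_mul_eq_div]
  set e : ℝ := α - (d:ℝ) with he
  have hc0 : (0:ℝ) ≤ (2*Real.pi*t) ^ (-(d:ℝ)/2) := by positivity
  set g1 : EuclideanSpace ℝ (Fin d) → ℝ≥0∞ := (closedBall b (Real.sqrt t)).indicator
      (fun x => ENNReal.ofReal ((2*Real.pi*t) ^ (-(d:ℝ)/2) * ‖x - b‖ ^ e)) with hg1
  have hg1meas : Measurable g1 :=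
    ((((measurable_norm_rpow _ e).comp ((continuous_id.sub continuous_const).measurable)).const_mul _).ennreal_ofReal).indicator measurableSet_closedBall
  have hpt : ∀ x, ENNReal.ofReal (heatKernel d t (x - c) * ‖x - b‖ ^ e)
      ≤ g1 x + ENNReal.ofReal (t ^ (e/2) * heatKernel d t (x - c)) := by
    intro x
    by_cases hx : x ∈ closedBall b (Real.sqrt t)
    · refine le_trans ?_ le_self_add
      rw [hg1, Set.indicator_of_mem hx]
      refine ENNReal.ofReal_le_ofReal
        (mul_le_mul_of_nonneg_right ?_ (Real.rpow_nonneg (norm_nonneg _) e))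
      unfold heatKernel
      calc (2 * Real.pi * t) ^ (-(d:ℝ)/2) * Real.exp (-‖x - c‖ ^ 2 / (2 * t))
          ≤ (2 * Real.pi * t) ^ (-(d:ℝ)/2) * 1 := by
            gcongr
            rw [Real.exp_le_one_iff]
            have : (0:ℝ) ≤ ‖x - c‖ ^ 2 := sq_nonneg _
            have h2t : (0:ℝ) < 2 * t := by linarith
            exact div_nonpos_of_nonpos_of_nonneg (by linarith) h2t.le
        _ = (2 * Real.pi * t) ^ (-(d:ℝ)/2) := mul_one _
    · refine le_trans ?_ le_add_self
      have hxn : Real.sqrt t < ‖x - b‖ := by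
        rw [mem_closedBall_iff_norm, not_le] at hx
        exact hx
      refine ENNReal.ofReal_le_ofReal ?_
      have h1 : ‖x - b‖ ^ e ≤ t ^ (e/2) := by
        rw [← hsq e]
        exact Real.rpow_le_rpow_of_nonpos hst hxn.le hdα.le
      calc heatKernel d t (x - c) * ‖x - b‖ ^ e
          ≤ heatKernel d t (x - c) * t ^ (e/2) :=
            mul_le_mul_of_nonneg_left h1 (heatKernel_nonneg d ht _)
        _ = t ^ (e/2) * heatKernel d t (x - c) := mul_comm _ _
  calc ∫⁻ x, ENNReal.ofReal (heatKernel d t (x - c) * ‖x - b‖ ^ e)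
      ≤ ∫⁻ x, (g1 x + ENNReal.ofReal (t ^ (e/2) * heatKernel d t (x - c))) := lintegral_mono hpt
    _ = (∫⁻ x, g1 x) + ∫⁻ x, ENNReal.ofReal (t ^ (e/2) * heatKernel d t (x - c)) :=
        lintegral_add_left hg1meas _
    _ ≤ (ENNReal.ofReal ((2*Real.pi) ^ (-(d:ℝ)/2)) * C) * ENNReal.ofReal (t ^ (e/2))
        + 1 * ENNReal.ofReal (t ^ (e/2)) := by
        gcongr
        · -- g1 integral
          rw [hg1, lintegral_indicator measurableSet_closedBall]
          simp_rw [ENNReal.ofReal_mul hc0]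
          rw [lintegral_const_mul' _ _ ENNReal.ofReal_ne_top,
            lintegral_closedBall_sub d _ e b]
          have hmain := hC (Real.sqrt t) hst
          calc ENNReal.ofReal ((2*Real.pi*t) ^ (-(d:ℝ)/2))
                * ∫⁻ y in closedBall (0 : EuclideanSpace ℝ (Fin d)) (Real.sqrt t),
                    ENNReal.ofReal (‖y‖ ^ (α - (d:ℝ)))
              ≤ ENNReal.ofReal ((2*Real.pi*t) ^ (-(d:ℝ)/2))
                * (C * ENNReal.ofReal (Real.sqrt t ^ α)) := by gcongr
            _ = (ENNReal.ofReal ((2*Real.pi) ^ (-(d:ℝ)/2)) * C) * ENNReal.ofReal (t ^ (e/2)) := by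
                rw [Real.mul_rpow (by positivity) ht.le, hsq α,
                  ENNReal.ofReal_mul (by positivity : (0:ℝ) ≤ (2*Real.pi) ^ (-(d:ℝ)/2))]
                rw [show (ENNReal.ofReal ((2*Real.pi) ^ (-(d:ℝ)/2))
                      * ENNReal.ofReal (t ^ (-(d:ℝ)/2))) * (C * ENNReal.ofReal (t ^ (α/2)))
                    = (ENNReal.ofReal ((2*Real.pi) ^ (-(d:ℝ)/2)) * C)
                      * (ENNReal.ofReal (t ^ (-(d:ℝ)/2)) * ENNReal.ofReal (t ^ (α/2))) by ring]
                congr 1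
                rw [← ENNReal.ofReal_mul (by positivity), ← Real.rpow_add ht]
                congr 1
                rw [he]
                ring
        · -- heat integral
          simp_rw [ENNReal.ofReal_mul (Real.rpow_nonneg ht.le (e/2))]
          rw [lintegral_const_mul' _ _ ENNReal.ofReal_ne_top,
            lintegral_sub_right_eq_self (fun x => ENNReal.ofReal (heatKernel d t x)) c,
            heat_lintegral d ht, mul_one, one_mul]
    _ = (1 + ENNReal.ofReal ((2*Real.pi) ^ (-(d:ℝ)/2)) * C) * ENNReal.ofReal (t ^ (e/2)) := by
        rw [one_mul]; ring

/-- For the Riesz kernel of order `α` (`0 < α < d`), there is a constant `D_{α,d} > 0` such that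
`J_f(u,v,y,z) ≤ D_{α,d} (u+v)^{-(d-α)/2}` for all `u, v > 0`, `y, z ∈ ℝ^d`. -/
theorem riesz_J_bound (d : ℕ) (hd : 1 ≤ d) (α : ℝ) (hα0 : 0 < α) (hαd : α < d) :
    ∃ D : ℝ, 0 < D ∧ ∀ u v : ℝ, 0 < u → 0 < v → ∀ y z : EuclideanSpace ℝ (Fin d),
      Jf d (rieszKernel d α) u v y z
        ≤ ENNReal.ofReal (D * (u + v) ^ (-((d : ℝ) - α) / 2)) := by
  obtain ⟨K, hKfin, hK⟩ := heat_riesz_bound d hd α hα0 hαd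
  set e : ℝ := α - (d:ℝ) with he
  set γ : ℝ := Real.Gamma (((d : ℝ) - α) / 2) * 2 ^ (-α) * Real.pi ^ (-(d : ℝ) / 2)
      / Real.Gamma (α / 2) with hγ
  have hαd' : (α:ℝ) < (d:ℝ) := hαd
  have hγpos : 0 < γ := by
    rw [hγ]
    have h1 : 0 < Real.Gamma (((d : ℝ) - α) / 2) := Real.Gamma_pos_of_pos (by linarith)
    have h2 : 0 < Real.Gamma (α / 2) := Real.Gamma_pos_of_pos (by linarith)
    have h3 : (0:ℝ) < 2 ^ (-α) := by positivity
    have h4 : (0:ℝ) < Real.pi ^ (-(d:ℝ)/2) := by positivity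
    positivity
  set Dnn : ℝ≥0∞ := ENNReal.ofReal γ * K * ENNReal.ofReal ((2:ℝ) ^ (-(e/2))) with hDnn
  have hDnnfin : Dnn ≠ ∞ :=
    ENNReal.mul_ne_top (ENNReal.mul_ne_top ENNReal.ofReal_ne_top hKfin) ENNReal.ofReal_ne_top
  refine ⟨Dnn.toReal + 1, by positivity, ?_⟩
  intro u v hu hv y z
  -- continuity and measurability facts
  have hkCont : ∀ t : ℝ, Continuous fun x : EuclideanSpace ℝ (Fin d) => heatKernel d t x := by
    intro t
    unfold heatKernel
    fun_prop
  have hmeas : Measurable (fun p : EuclideanSpace ℝ (Fin d) × EuclideanSpace ℝ (Fin d) =>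
      ENNReal.ofReal (heatKernel d u (p.1 - y) * heatKernel d v (p.2 - z)
        * rieszKernel d α (p.1 - p.2))) := by
    have m1 : Measurable fun p : EuclideanSpace ℝ (Fin d) × EuclideanSpace ℝ (Fin d) =>
        heatKernel d u (p.1 - y) := ((hkCont u).comp (continuous_fst.sub continuous_const)).measurable
    have m2 : Measurable fun p : EuclideanSpace ℝ (Fin d) × EuclideanSpace ℝ (Fin d) =>
        heatKernel d v (p.2 - z) := ((hkCont v).comp (continuous_snd.sub continuous_const)).measurable
    have m3 : Measurable fun p : EuclideanSpace ℝ (Fin d) × EuclideanSpace ℝ (Fin d) =>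
        rieszKernel d α (p.1 - p.2) := by
      unfold rieszKernel
      exact (((measurable_norm_rpow _ e).comp
        (continuous_fst.sub continuous_snd).measurable)).const_mul _
    exact ((m1.mul m2).mul m3).ennreal_ofReal
  -- one-sided bounds
  have heat1 : ∀ (t : ℝ), 0 < t → ∀ w : EuclideanSpace ℝ (Fin d),
      ∫⁻ x, ENNReal.ofReal (heatKernel d t (x - w)) = 1 := by
    intro t ht w
    rw [lintegral_sub_right_eq_self (fun x => ENNReal.ofReal (heatKernel d t x)) w]
    exact heat_lintegral d ht
  have hkn : ∀ (t : ℝ), 0 < t → ∀ w : EuclideanSpace ℝ (Fin d), 0 ≤ heatKernel d t w := by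
    intro t ht w
    unfold heatKernel
    positivity
  have hen : e / 2 ≤ 0 := by rw [he]; linarith
  have boundv : Jf d (rieszKernel d α) u v y z
      ≤ ENNReal.ofReal γ * K * ENNReal.ofReal (v ^ (e/2)) := by
    have step : ∀ x : EuclideanSpace ℝ (Fin d),
        (∫⁻ x', ENNReal.ofReal (heatKernel d u (x - y) * heatKernel d v (x' - z)
          * rieszKernel d α (x - x')))
        ≤ ENNReal.ofReal (heatKernel d u (x - y))
            * (ENNReal.ofReal γ * (K * ENNReal.ofReal (v ^ (e/2)))) := by
      intro x
      have hrw : ∀ x' : EuclideanSpace ℝ (Fin d),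
          ENNReal.ofReal (heatKernel d u (x - y) * heatKernel d v (x' - z)
            * rieszKernel d α (x - x'))
          = (ENNReal.ofReal (heatKernel d u (x - y)) * ENNReal.ofReal γ)
              * ENNReal.ofReal (heatKernel d v (x' - z) * ‖x' - x‖ ^ e) := by
        intro x'
        rw [show heatKernel d u (x - y) * heatKernel d v (x' - z) * rieszKernel d α (x - x')
            = (heatKernel d u (x - y) * γ) * (heatKernel d v (x' - z) * ‖x' - x‖ ^ e) from by
              rw [rieszKernel, ← hγ, ← he, norm_sub_rev]; ring,
          ENNReal.ofReal_mul (mul_nonneg (hkn u hu _) hγpos.le),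
          ENNReal.ofReal_mul (hkn u hu _)]
      calc (∫⁻ x', ENNReal.ofReal (heatKernel d u (x - y) * heatKernel d v (x' - z)
              * rieszKernel d α (x - x')))
          = (ENNReal.ofReal (heatKernel d u (x - y)) * ENNReal.ofReal γ)
              * ∫⁻ x', ENNReal.ofReal (heatKernel d v (x' - z) * ‖x' - x‖ ^ e) := by
            simp_rw [hrw]
            exact lintegral_const_mul' _ _
              (ENNReal.mul_ne_top ENNReal.ofReal_ne_top ENNReal.ofReal_ne_top)
        _ ≤ (ENNReal.ofReal (heatKernel d u (x - y)) * ENNReal.ofReal γ)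
              * (K * ENNReal.ofReal (v ^ (e/2))) := by
            gcongr
            exact hK v hv x z
        _ = ENNReal.ofReal (heatKernel d u (x - y))
              * (ENNReal.ofReal γ * (K * ENNReal.ofReal (v ^ (e/2)))) := by ring
    calc Jf d (rieszKernel d α) u v y z
        ≤ ∫⁻ x, ENNReal.ofReal (heatKernel d u (x - y))
            * (ENNReal.ofReal γ * (K * ENNReal.ofReal (v ^ (e/2)))) := lintegral_mono step
      _ = (∫⁻ x, ENNReal.ofReal (heatKernel d u (x - y)))
            * (ENNReal.ofReal γ * (K * ENNReal.ofReal (v ^ (e/2)))) :=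
          lintegral_mul_const' _ _
            (ENNReal.mul_ne_top ENNReal.ofReal_ne_top
              (ENNReal.mul_ne_top hKfin ENNReal.ofReal_ne_top))
      _ = ENNReal.ofReal γ * K * ENNReal.ofReal (v ^ (e/2)) := by
          rw [heat1 u hu y, one_mul]; ring
  have boundu : Jf d (rieszKernel d α) u v y z
      ≤ ENNReal.ofReal γ * K * ENNReal.ofReal (u ^ (e/2)) := by
    have hswap : Jf d (rieszKernel d α) u v y z
        = ∫⁻ x', ∫⁻ x, ENNReal.ofReal (heatKernel d u (x - y) * heatKernel d v (x' - z)
            * rieszKernel d α (x - x')) := by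
      exact lintegral_lintegral_swap hmeas.aemeasurable
    have step : ∀ x' : EuclideanSpace ℝ (Fin d),
        (∫⁻ x, ENNReal.ofReal (heatKernel d u (x - y) * heatKernel d v (x' - z)
          * rieszKernel d α (x - x')))
        ≤ ENNReal.ofReal (heatKernel d v (x' - z))
            * (ENNReal.ofReal γ * (K * ENNReal.ofReal (u ^ (e/2)))) := by
      intro x'
      have hrw : ∀ x : EuclideanSpace ℝ (Fin d),
          ENNReal.ofReal (heatKernel d u (x - y) * heatKernel d v (x' - z)
            * rieszKernel d α (x - x'))
          = (ENNReal.ofReal (heatKernel d v (x' - z)) * ENNReal.ofReal γ)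
              * ENNReal.ofReal (heatKernel d u (x - y) * ‖x - x'‖ ^ e) := by
        intro x
        rw [show heatKernel d u (x - y) * heatKernel d v (x' - z) * rieszKernel d α (x - x')
            = (heatKernel d v (x' - z) * γ) * (heatKernel d u (x - y) * ‖x - x'‖ ^ e) from by
              rw [rieszKernel, ← hγ, ← he]; ring,
          ENNReal.ofReal_mul (mul_nonneg (hkn v hv _) hγpos.le),
          ENNReal.ofReal_mul (hkn v hv _)]
      calc (∫⁻ x, ENNReal.ofReal (heatKernel d u (x - y) * heatKernel d v (x' - z)
              * rieszKernel d α (x - x')))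
          = (ENNReal.ofReal (heatKernel d v (x' - z)) * ENNReal.ofReal γ)
              * ∫⁻ x, ENNReal.ofReal (heatKernel d u (x - y) * ‖x - x'‖ ^ e) := by
            simp_rw [hrw]
            exact lintegral_const_mul' _ _
              (ENNReal.mul_ne_top ENNReal.ofReal_ne_top ENNReal.ofReal_ne_top)
        _ ≤ (ENNReal.ofReal (heatKernel d v (x' - z)) * ENNReal.ofReal γ)
              * (K * ENNReal.ofReal (u ^ (e/2))) := by
            gcongr
            exact hK u hu x' y
        _ = ENNReal.ofReal (heatKernel d v (x' - z))
              * (ENNReal.ofReal γ * (K * ENNReal.ofReal (u ^ (e/2)))) := by ring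
    calc Jf d (rieszKernel d α) u v y z
        = ∫⁻ x', ∫⁻ x, ENNReal.ofReal (heatKernel d u (x - y) * heatKernel d v (x' - z)
            * rieszKernel d α (x - x')) := hswap
      _ ≤ ∫⁻ x', ENNReal.ofReal (heatKernel d v (x' - z))
            * (ENNReal.ofReal γ * (K * ENNReal.ofReal (u ^ (e/2)))) := lintegral_mono step
      _ = (∫⁻ x', ENNReal.ofReal (heatKernel d v (x' - z)))
            * (ENNReal.ofReal γ * (K * ENNReal.ofReal (u ^ (e/2)))) :=
          lintegral_mul_const' _ _
            (ENNReal.mul_ne_top ENNReal.ofReal_ne_top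
              (ENNReal.mul_ne_top hKfin ENNReal.ofReal_ne_top))
      _ = ENNReal.ofReal γ * K * ENNReal.ofReal (u ^ (e/2)) := by
          rw [heat1 v hv z, one_mul]; ring
  -- combine
  have key : Jf d (rieszKernel d α) u v y z
      ≤ ENNReal.ofReal γ * K * ENNReal.ofReal (((u+v)/2) ^ (e/2)) := by
    rcases le_total u v with huv | huv
    · exact boundv.trans (mul_le_mul_right (ENNReal.ofReal_le_ofReal
        (Real.rpow_le_rpow_of_nonpos (by positivity) (by linarith) hen)) _)
    · exact boundu.trans (mul_le_mul_right (ENNReal.ofReal_le_ofReal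
        (Real.rpow_le_rpow_of_nonpos (by positivity) (by linarith) hen)) _)
  have hhalf : ((u+v)/2 : ℝ) ^ (e/2) = (u+v) ^ (e/2) * (2:ℝ) ^ (-(e/2)) := by
    rw [Real.div_rpow (by positivity) (by norm_num : (0:ℝ) ≤ 2), div_eq_mul_inv,
      ← Real.rpow_neg (by norm_num : (0:ℝ) ≤ 2)]
  have hexp : -((d:ℝ) - α)/2 = e/2 := by rw [he]; ring
  rw [hexp, ENNReal.ofReal_mul (by positivity)]
  calc Jf d (rieszKernel d α) u v y z
      ≤ ENNReal.ofReal γ * K * ENNReal.ofReal ((u+v) ^ (e/2) * (2:ℝ) ^ (-(e/2))) := by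
        rw [← hhalf]; exact key
    _ = Dnn * ENNReal.ofReal ((u+v) ^ (e/2)) := by
        rw [ENNReal.ofReal_mul (by positivity), hDnn]; ring
    _ ≤ ENNReal.ofReal (Dnn.toReal + 1) * ENNReal.ofReal ((u+v) ^ (e/2)) := by
        refine mul_le_mul_left ?_ _
        calc Dnn = ENNReal.ofReal Dnn.toReal := (ENNReal.ofReal_toReal hDnnfin).symm
          _ ≤ ENNReal.ofReal (Dnn.toReal + 1) :=
              ENNReal.ofReal_le_ofReal (by linarith [ENNReal.toReal_nonneg (a := Dnn)])
end

section
/- Let d ≥ 1 be an integer, 0 < α < d, and let f be the Bessel kernel of order α on ℝ^d. Then there is a constant D_{α,d} > 0, depending only on α and d, such that for all u, v > 0 and all y, z ∈ ℝ^d: J_f(u,v,y,z) = ∫_{ℝ^d}∫_{ℝ^d} p_u(x−y) p_v(x'−z) f(x−x') dx dx' ≤ D_{α,d} (u+v)^{−(d−α)/2}. -/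
open MeasureTheory Real Set
set_option maxHeartbeats 1000000

/-- The Bessel kernel of order `α`:
`f(x) = γ'_α ∫₀^∞ w^{(α-d)/2-1} e^{-w} e^{-|x|²/(4w)} dw`, `γ'_α = (4π)^{α/2} Γ(α/2)`. -/
noncomputable def besselKernel (d : ℕ) (α : ℝ) (x : EuclideanSpace ℝ (Fin d)) : ℝ :=
  ((4 * Real.pi) ^ (α / 2) * Real.Gamma (α / 2)) *
    ∫ w in Set.Ioi (0 : ℝ),
      w ^ ((α - (d : ℝ)) / 2 - 1) * Real.exp (-w) * Real.exp (-‖x‖ ^ 2 / (4 * w))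

section Aux

variable {d : ℕ}

local notation "E" => EuclideanSpace ℝ (Fin d)

lemma exp_le_one_of_nonpos {x : ℝ} (h : x ≤ 0) : Real.exp x ≤ 1 := by
  simpa using Real.exp_le_exp.2 h

lemma gauss_integrable {b : ℝ} (hb : 0 < b) :
    Integrable (fun x : E => Real.exp (-b * ‖x‖ ^ 2)) := by
  have h := (GaussianFourier.integrable_cexp_neg_mul_sq_norm_add (V := E)
    (b := (b : ℂ)) (by simpa using hb) 0 0).re
  refine h.congr (Filter.Eventually.of_forall fun x => ?_)
  have h2 : (-(b:ℂ) * (‖x‖:ℂ) ^ 2 + 0 * ((inner ℝ (0 : E) x : ℝ) : ℂ)) = ((-b * ‖x‖^2 : ℝ) : ℂ) := by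
    push_cast; ring
  simp only [h2]
  exact Complex.exp_ofReal_re _

lemma gauss_lintegral {b : ℝ} (hb : 0 < b) (c : EuclideanSpace ℝ (Fin d)) :
    ∫⁻ x : E, ENNReal.ofReal (Real.exp (-‖x - c‖ ^ 2 / b)) =
      ENNReal.ofReal ((Real.pi * b) ^ ((d : ℝ) / 2)) := by
  have h1 : ∀ x : E, (-‖x‖ ^ 2 / b) = -b⁻¹ * ‖x‖ ^ 2 := fun x => by
    field_simp
  calc ∫⁻ x : E, ENNReal.ofReal (Real.exp (-‖x - c‖ ^ 2 / b))
      = ∫⁻ x : E, ENNReal.ofReal (Real.exp (-‖x‖ ^ 2 / b)) := by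
        simp_rw [sub_eq_add_neg]
        exact lintegral_add_right_eq_self (fun x => ENNReal.ofReal (Real.exp (-‖x‖ ^ 2 / b))) (-c)
    _ = ENNReal.ofReal (∫ x : E, Real.exp (-b⁻¹ * ‖x‖ ^ 2)) := by
        simp_rw [h1]
        rw [ofReal_integral_eq_lintegral_ofReal (gauss_integrable (by positivity))
          (Filter.Eventually.of_forall fun x => (Real.exp_pos _).le)]
    _ = ENNReal.ofReal ((Real.pi * b) ^ ((d : ℝ) / 2)) := by
        rw [GaussianFourier.integral_rexp_neg_mul_sq_norm (by positivity)]
        congr 1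
        rw [finrank_euclideanSpace_fin]
        congr 1
        field_simp

lemma hk_nonneg {t : ℝ} (ht : 0 < t) (x : E) : 0 ≤ heatKernel d t x := by
  unfold heatKernel; positivity

lemma hk_le {t : ℝ} (ht : 0 < t) (x : E) :
    heatKernel d t x ≤ (2 * Real.pi * t) ^ (-(d : ℝ) / 2) := by
  unfold heatKernel
  refine mul_le_of_le_one_right (by positivity) ?_
  apply exp_le_one_of_nonpos
  rw [neg_div]
  exact neg_nonpos.2 (by positivity)

lemma hk_lintegral {t : ℝ} (ht : 0 < t) (y : E) :
    ∫⁻ x : E, ENNReal.ofReal (heatKernel d t (x - y)) = 1 := by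
  unfold heatKernel
  simp_rw [ENNReal.ofReal_mul (by positivity : (0:ℝ) ≤ (2 * Real.pi * t) ^ (-(d : ℝ) / 2))]
  rw [lintegral_const_mul' _ _ ENNReal.ofReal_ne_top,
    gauss_lintegral (by positivity : (0:ℝ) < 2*t) y,
    ← ENNReal.ofReal_mul (by positivity)]
  rw [show Real.pi * (2*t) = 2 * Real.pi * t by ring, ← Real.rpow_add (by positivity),
    show -(d:ℝ)/2 + (d:ℝ)/2 = 0 by ring, Real.rpow_zero, ENNReal.ofReal_one]

/-- kernel for the inner double integral -/
noncomputable def Kfun (d : ℕ) (u v w : ℝ) (y z : EuclideanSpace ℝ (Fin d)) : ENNReal :=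
  ∫⁻ x : EuclideanSpace ℝ (Fin d), ∫⁻ x' : EuclideanSpace ℝ (Fin d),
    ENNReal.ofReal (heatKernel d u (x - y) * heatKernel d v (x' - z) *
      Real.exp (-‖x - x'‖ ^ 2 / (4 * w)))

lemma hk_meas (t : ℝ) : Measurable (heatKernel d t) := by
  unfold heatKernel; fun_prop

lemma Kmeas (u v w : ℝ) (y z : E) :
    Measurable (fun p : E × E =>
      ENNReal.ofReal (heatKernel d u (p.1 - y) * heatKernel d v (p.2 - z) *
        Real.exp (-‖p.1 - p.2‖ ^ 2 / (4 * w)))) := by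
  apply ENNReal.measurable_ofReal.comp
  exact (((hk_meas u).comp (measurable_fst.sub measurable_const)).mul
      ((hk_meas v).comp (measurable_snd.sub measurable_const))).mul
    (((measurable_fst.sub measurable_snd).norm.pow_const 2).neg.div measurable_const).exp

lemma Kfun_swap (u v w : ℝ) (y z : E) : Kfun d u v w y z = Kfun d v u w z y := by
  unfold Kfun
  rw [lintegral_lintegral_swap (Kmeas u v w y z).aemeasurable]
  refine lintegral_congr fun a => lintegral_congr fun b => ?_
  rw [norm_sub_rev]
  ring_nf

lemma Kfun_le_one {u v : ℝ} (hu : 0 < u) (hv : 0 < v) {w : ℝ} (hw : 0 < w) (y z : E) :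
    Kfun d u v w y z ≤ 1 := by
  unfold Kfun
  calc ∫⁻ x : E, ∫⁻ x' : E, ENNReal.ofReal (heatKernel d u (x - y) * heatKernel d v (x' - z) *
        Real.exp (-‖x - x'‖ ^ 2 / (4 * w)))
      ≤ ∫⁻ x : E, ∫⁻ x' : E,
          ENNReal.ofReal (heatKernel d u (x - y) * heatKernel d v (x' - z)) := by
        refine lintegral_mono fun x => lintegral_mono fun x' => ENNReal.ofReal_le_ofReal ?_
        refine mul_le_of_le_one_right (mul_nonneg (hk_nonneg hu _) (hk_nonneg hv _)) ?_
        apply exp_le_one_of_nonpos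
        rw [neg_div]
        exact neg_nonpos.2 (by positivity)
    _ = 1 := by
        simp_rw [ENNReal.ofReal_mul (hk_nonneg hu _),
          lintegral_const_mul' _ _ ENNReal.ofReal_ne_top, hk_lintegral hv z, mul_one]
        exact hk_lintegral hu y

lemma Kfun_le_right {u v : ℝ} (hu : 0 < u) (hv : 0 < v) {w : ℝ} (hw : 0 < w) (y z : E) :
    Kfun d u v w y z ≤
      ENNReal.ofReal ((2 * Real.pi * v) ^ (-(d : ℝ) / 2) * (Real.pi * (4 * w)) ^ ((d : ℝ) / 2)) := by
  unfold Kfun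
  calc ∫⁻ x : E, ∫⁻ x' : E, ENNReal.ofReal (heatKernel d u (x - y) * heatKernel d v (x' - z) *
        Real.exp (-‖x - x'‖ ^ 2 / (4 * w)))
      ≤ ∫⁻ x : E, ∫⁻ x' : E, ENNReal.ofReal (heatKernel d u (x - y) *
          (2 * Real.pi * v) ^ (-(d : ℝ) / 2) * Real.exp (-‖x' - x‖ ^ 2 / (4 * w))) := by
        refine lintegral_mono fun x => lintegral_mono fun x' => ENNReal.ofReal_le_ofReal ?_
        rw [norm_sub_rev x]
        have h1 : heatKernel d u (x - y) * heatKernel d v (x' - z) ≤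
            heatKernel d u (x - y) * (2 * Real.pi * v) ^ (-(d : ℝ) / 2) :=
          mul_le_mul_of_nonneg_left (hk_le hv _) (hk_nonneg hu _)
        exact mul_le_mul_of_nonneg_right h1 (Real.exp_pos _).le
    _ = ∫⁻ x : E, ENNReal.ofReal (heatKernel d u (x - y)) *
          (ENNReal.ofReal ((2 * Real.pi * v) ^ (-(d : ℝ) / 2)) *
            ENNReal.ofReal ((Real.pi * (4 * w)) ^ ((d : ℝ) / 2))) := by
        refine lintegral_congr fun x => ?_
        have h2 : ∀ x' : E, ENNReal.ofReal (heatKernel d u (x - y) *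
              (2 * Real.pi * v) ^ (-(d : ℝ) / 2) * Real.exp (-‖x' - x‖ ^ 2 / (4 * w))) =
            (ENNReal.ofReal (heatKernel d u (x - y)) *
              ENNReal.ofReal ((2 * Real.pi * v) ^ (-(d : ℝ) / 2))) *
              ENNReal.ofReal (Real.exp (-‖x' - x‖ ^ 2 / (4 * w))) := fun x' => by
          rw [← ENNReal.ofReal_mul (hk_nonneg hu (x - y)),
            ← ENNReal.ofReal_mul (mul_nonneg (hk_nonneg hu (x - y)) (by positivity))]
        rw [lintegral_congr h2, lintegral_const_mul' _ _
          (ENNReal.mul_ne_top ENNReal.ofReal_ne_top ENNReal.ofReal_ne_top),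
          gauss_lintegral (by positivity : (0:ℝ) < 4 * w) x, mul_assoc]
    _ = ENNReal.ofReal ((2 * Real.pi * v) ^ (-(d : ℝ) / 2) *
          (Real.pi * (4 * w)) ^ ((d : ℝ) / 2)) := by
        rw [lintegral_mul_const' _ _
          (ENNReal.mul_ne_top ENNReal.ofReal_ne_top ENNReal.ofReal_ne_top),
          hk_lintegral hu y, one_mul, ← ENNReal.ofReal_mul (by positivity)]

lemma bessel_le {α : ℝ} (hγ : 0 ≤ (4 * Real.pi) ^ (α / 2) * Real.Gamma (α / 2)) (x : E) :
    ENNReal.ofReal (besselKernel d α x) ≤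
      ENNReal.ofReal ((4 * Real.pi) ^ (α / 2) * Real.Gamma (α / 2)) *
        ∫⁻ w in Ioi (0:ℝ), ENNReal.ofReal (w ^ ((α - (d : ℝ)) / 2 - 1) * Real.exp (-w) *
          Real.exp (-‖x‖ ^ 2 / (4 * w))) := by
  by_cases hg : IntegrableOn (fun w : ℝ => w ^ ((α - (d : ℝ)) / 2 - 1) * Real.exp (-w) *
      Real.exp (-‖x‖ ^ 2 / (4 * w))) (Ioi 0) volume
  · unfold besselKernel
    rw [ENNReal.ofReal_mul hγ, ofReal_integral_eq_lintegral_ofReal hg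
      (((ae_restrict_mem measurableSet_Ioi).mono) fun w hw =>
        mul_nonneg (mul_nonneg (Real.rpow_nonneg (le_of_lt hw) _) (Real.exp_pos _).le)
          (Real.exp_pos _).le)]
  · unfold besselKernel
    rw [integral_undef hg, mul_zero, ENNReal.ofReal_zero]
    exact zero_le

lemma Fmeas' {X : Type*} [MeasurableSpace X] (α u v : ℝ) (y z : E)
    {f g : X → E} {h : X → ℝ} (hf : Measurable f) (hg : Measurable g) (hh : Measurable h) :
    Measurable (fun p : X =>
      ENNReal.ofReal (heatKernel d u (f p - y) * heatKernel d v (g p - z) *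
        (h p ^ ((α - (d : ℝ)) / 2 - 1) * Real.exp (-(h p)) *
          Real.exp (-‖f p - g p‖ ^ 2 / (4 * h p))))) := by
  apply ENNReal.measurable_ofReal.comp
  apply Measurable.mul
  · exact ((hk_meas u).comp (hf.sub measurable_const)).mul
      ((hk_meas v).comp (hg.sub measurable_const))
  · apply Measurable.mul
    · exact (hh.pow_const _).mul (hh.neg.exp)
    · exact (((hf.sub hg).norm.pow_const 2).neg.div (hh.const_mul 4)).exp

/-- For the Bessel kernel of order `α` (`0 < α < d`), there is a constant `D_{α,d} > 0` such that
`J_f(u,v,y,z) ≤ D_{α,d} (u+v)^{-(d-α)/2}` for all `u, v > 0`, `y, z ∈ ℝ^d`. -/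
theorem bessel_J_bound (d : ℕ) (hd : 1 ≤ d) (α : ℝ) (hα0 : 0 < α) (hαd : α < d) :
    ∃ D : ℝ, 0 < D ∧ ∀ u v : ℝ, 0 < u → 0 < v → ∀ y z : EuclideanSpace ℝ (Fin d),
      Jf d (besselKernel d α) u v y z
        ≤ ENNReal.ofReal (D * (u + v) ^ (-((d : ℝ) - α) / 2)) := by
  have hdα : 0 < (d : ℝ) - α := by linarith
  have hγpos : 0 < (4 * Real.pi) ^ (α / 2) * Real.Gamma (α / 2) :=
    mul_pos (Real.rpow_pos_of_pos (by positivity) _) (Real.Gamma_pos_of_pos (by linarith))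
  refine ⟨((4 * Real.pi) ^ (α / 2) * Real.Gamma (α / 2)) *
      (4 ^ (((d : ℝ) - α) / 2) * (2 / α + 2 / ((d : ℝ) - α))), ?_, ?_⟩
  · exact mul_pos hγpos (mul_pos (Real.rpow_pos_of_pos (by norm_num) _)
      (add_pos (div_pos two_pos hα0) (div_pos two_pos hdα)))
  intro u v hu hv y z
  have ht : 0 < u + v := by linarith
  have ht4 : 0 < (u + v) / 4 := by linarith
  have hβ : ((α - (d : ℝ)) / 2 - 1) < -1 := by linarith
  -- the bound on the Gaussian double integral
  have HK : ∀ w : ℝ, 0 < w → Kfun d u v w y z ≤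
      min 1 (ENNReal.ofReal ((4 * w / (u + v)) ^ ((d : ℝ) / 2))) := by
    intro w hw
    refine le_min (Kfun_le_one hu hv hw y z) ?_
    have key : ∀ b : ℝ, 0 < b → u + v ≤ 2 * b →
        ENNReal.ofReal ((2 * Real.pi * b) ^ (-(d : ℝ) / 2) *
            (Real.pi * (4 * w)) ^ ((d : ℝ) / 2))
          ≤ ENNReal.ofReal ((4 * w / (u + v)) ^ ((d : ℝ) / 2)) := by
      intro b hb hab
      apply ENNReal.ofReal_le_ofReal
      have e0 : (Real.pi * (4 * w)) / (2 * Real.pi * b) = 2 * w / b := by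
        rw [div_eq_div_iff (by positivity) (by positivity)]; ring
      have e1 : (2 * Real.pi * b) ^ (-(d : ℝ) / 2) * (Real.pi * (4 * w)) ^ ((d : ℝ) / 2)
          = (2 * w / b) ^ ((d : ℝ) / 2) := by
        rw [neg_div, Real.rpow_neg (by positivity), inv_mul_eq_div,
          ← Real.div_rpow (by positivity) (by positivity), e0]
      rw [e1]
      apply Real.rpow_le_rpow (by positivity) _ (by positivity)
      rw [div_le_div_iff₀ hb ht]
      nlinarith [mul_le_mul_of_nonneg_left hab (by linarith : (0:ℝ) ≤ 2 * w)]
    rcases le_total u v with h | h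
    · exact (Kfun_le_right hu hv hw y z).trans (key v hv (by linarith))
    · rw [Kfun_swap]
      exact (Kfun_le_right hv hu hw z y).trans (key u hu (by linarith))
  have step1 : Jf d (besselKernel d α) u v y z ≤
      ENNReal.ofReal ((4 * Real.pi) ^ (α / 2) * Real.Gamma (α / 2)) *
        ∫⁻ x, ∫⁻ x', ∫⁻ w in Set.Ioi (0:ℝ), ENNReal.ofReal (heatKernel d u (x - y) * heatKernel d v (x' - z) * (w ^ ((α - (d : ℝ)) / 2 - 1) * Real.exp (-w) * Real.exp (-‖x - x'‖ ^ 2 / (4 * w)))) := by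
    have point : ∀ x x' : EuclideanSpace ℝ (Fin d),
        ENNReal.ofReal (heatKernel d u (x - y) * heatKernel d v (x' - z) *
          besselKernel d α (x - x')) ≤
        ENNReal.ofReal ((4 * Real.pi) ^ (α / 2) * Real.Gamma (α / 2)) *
          ∫⁻ w in Set.Ioi (0:ℝ), ENNReal.ofReal (heatKernel d u (x - y) * heatKernel d v (x' - z) * (w ^ ((α - (d : ℝ)) / 2 - 1) * Real.exp (-w) * Real.exp (-‖x - x'‖ ^ 2 / (4 * w)))) := by
      intro x x'
      have hP : 0 ≤ heatKernel d u (x - y) * heatKernel d v (x' - z) :=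
        mul_nonneg (hk_nonneg hu _) (hk_nonneg hv _)
      calc ENNReal.ofReal (heatKernel d u (x - y) * heatKernel d v (x' - z) *
            besselKernel d α (x - x'))
          = ENNReal.ofReal (heatKernel d u (x - y) * heatKernel d v (x' - z)) *
            ENNReal.ofReal (besselKernel d α (x - x')) := ENNReal.ofReal_mul hP
        _ ≤ ENNReal.ofReal (heatKernel d u (x - y) * heatKernel d v (x' - z)) *
            (ENNReal.ofReal ((4 * Real.pi) ^ (α / 2) * Real.Gamma (α / 2)) *
              ∫⁻ w in Set.Ioi (0:ℝ), ENNReal.ofReal (w ^ ((α - (d : ℝ)) / 2 - 1) *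
                Real.exp (-w) * Real.exp (-‖x - x'‖ ^ 2 / (4 * w)))) :=
            mul_le_mul_right (bessel_le hγpos.le (x - x')) _
        _ = ENNReal.ofReal ((4 * Real.pi) ^ (α / 2) * Real.Gamma (α / 2)) *
            (ENNReal.ofReal (heatKernel d u (x - y) * heatKernel d v (x' - z)) *
              ∫⁻ w in Set.Ioi (0:ℝ), ENNReal.ofReal (w ^ ((α - (d : ℝ)) / 2 - 1) *
                Real.exp (-w) * Real.exp (-‖x - x'‖ ^ 2 / (4 * w)))) := by ring
        _ = ENNReal.ofReal ((4 * Real.pi) ^ (α / 2) * Real.Gamma (α / 2)) *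
            ∫⁻ w in Set.Ioi (0:ℝ),
              ENNReal.ofReal (heatKernel d u (x - y) * heatKernel d v (x' - z)) *
              ENNReal.ofReal (w ^ ((α - (d : ℝ)) / 2 - 1) *
                Real.exp (-w) * Real.exp (-‖x - x'‖ ^ 2 / (4 * w))) := by
            rw [lintegral_const_mul' _ _ ENNReal.ofReal_ne_top]
        _ = ENNReal.ofReal ((4 * Real.pi) ^ (α / 2) * Real.Gamma (α / 2)) *
            ∫⁻ w in Set.Ioi (0:ℝ), ENNReal.ofReal (heatKernel d u (x - y) * heatKernel d v (x' - z) * (w ^ ((α - (d : ℝ)) / 2 - 1) * Real.exp (-w) * Real.exp (-‖x - x'‖ ^ 2 / (4 * w)))) := by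
            congr 1
            refine lintegral_congr fun w => ?_
            exact (ENNReal.ofReal_mul hP).symm
    unfold Jf
    calc ∫⁻ x, ∫⁻ x', ENNReal.ofReal (heatKernel d u (x - y) * heatKernel d v (x' - z) *
          besselKernel d α (x - x'))
        ≤ ∫⁻ x, ∫⁻ x', (ENNReal.ofReal ((4 * Real.pi) ^ (α / 2) * Real.Gamma (α / 2)) *
            ∫⁻ w in Set.Ioi (0:ℝ), ENNReal.ofReal (heatKernel d u (x - y) * heatKernel d v (x' - z) * (w ^ ((α - (d : ℝ)) / 2 - 1) * Real.exp (-w) * Real.exp (-‖x - x'‖ ^ 2 / (4 * w))))) :=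
          lintegral_mono fun x => lintegral_mono fun x' => point x x'
      _ = ENNReal.ofReal ((4 * Real.pi) ^ (α / 2) * Real.Gamma (α / 2)) *
            ∫⁻ x, ∫⁻ x', ∫⁻ w in Set.Ioi (0:ℝ), ENNReal.ofReal (heatKernel d u (x - y) * heatKernel d v (x' - z) * (w ^ ((α - (d : ℝ)) / 2 - 1) * Real.exp (-w) * Real.exp (-‖x - x'‖ ^ 2 / (4 * w)))) := by
          simp_rw [lintegral_const_mul' _ _ ENNReal.ofReal_ne_top]
  have swap_inner : ∀ x, (∫⁻ x', ∫⁻ w in Set.Ioi (0:ℝ), ENNReal.ofReal (heatKernel d u (x - y) * heatKernel d v (x' - z) * (w ^ ((α - (d : ℝ)) / 2 - 1) * Real.exp (-w) * Real.exp (-‖x - x'‖ ^ 2 / (4 * w))))) =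
      ∫⁻ w in Set.Ioi (0:ℝ), ∫⁻ x', ENNReal.ofReal (heatKernel d u (x - y) * heatKernel d v (x' - z) * (w ^ ((α - (d : ℝ)) / 2 - 1) * Real.exp (-w) * Real.exp (-‖x - x'‖ ^ 2 / (4 * w)))) := fun x =>
    lintegral_lintegral_swap
      (Fmeas' α u v y z measurable_const measurable_fst measurable_snd).aemeasurable
  have swap_outer : (∫⁻ x, ∫⁻ w in Set.Ioi (0:ℝ), ∫⁻ x', ENNReal.ofReal (heatKernel d u (x - y) * heatKernel d v (x' - z) * (w ^ ((α - (d : ℝ)) / 2 - 1) * Real.exp (-w) * Real.exp (-‖x - x'‖ ^ 2 / (4 * w))))) =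
      ∫⁻ w in Set.Ioi (0:ℝ), ∫⁻ x, ∫⁻ x', ENNReal.ofReal (heatKernel d u (x - y) * heatKernel d v (x' - z) * (w ^ ((α - (d : ℝ)) / 2 - 1) * Real.exp (-w) * Real.exp (-‖x - x'‖ ^ 2 / (4 * w)))) := by
    have hm : Measurable fun q : (EuclideanSpace ℝ (Fin d) × ℝ) × EuclideanSpace ℝ (Fin d) =>
        ENNReal.ofReal (heatKernel d u (q.1.1 - y) * heatKernel d v (q.2 - z) * (q.1.2 ^ ((α - (d : ℝ)) / 2 - 1) * Real.exp (-q.1.2) * Real.exp (-‖q.1.1 - q.2‖ ^ 2 / (4 * q.1.2)))) :=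
      Fmeas' α u v y z measurable_fst.fst measurable_snd measurable_fst.snd
    have hm2 : Measurable fun p : EuclideanSpace ℝ (Fin d) × ℝ =>
        ∫⁻ x' : EuclideanSpace ℝ (Fin d),
        ENNReal.ofReal (heatKernel d u (p.1 - y) * heatKernel d v (x' - z) * (p.2 ^ ((α - (d : ℝ)) / 2 - 1) * Real.exp (-p.2) * Real.exp (-‖p.1 - x'‖ ^ 2 / (4 * p.2)))) :=
      hm.lintegral_prod_right'
    exact lintegral_lintegral_swap hm2.aemeasurable
  have inner_eq : ∀ w : ℝ, 0 < w → (∫⁻ x, ∫⁻ x', ENNReal.ofReal (heatKernel d u (x - y) * heatKernel d v (x' - z) * (w ^ ((α - (d : ℝ)) / 2 - 1) * Real.exp (-w) * Real.exp (-‖x - x'‖ ^ 2 / (4 * w))))) =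
      ENNReal.ofReal (w ^ ((α - (d : ℝ)) / 2 - 1) * Real.exp (-w)) * Kfun d u v w y z := by
    intro w hw
    have hc : 0 ≤ w ^ ((α - (d : ℝ)) / 2 - 1) * Real.exp (-w) :=
      mul_nonneg (Real.rpow_nonneg hw.le _) (Real.exp_pos _).le
    have hpt : ∀ x x', ENNReal.ofReal (heatKernel d u (x - y) * heatKernel d v (x' - z) * (w ^ ((α - (d : ℝ)) / 2 - 1) * Real.exp (-w) * Real.exp (-‖x - x'‖ ^ 2 / (4 * w)))) =
        ENNReal.ofReal (w ^ ((α - (d : ℝ)) / 2 - 1) * Real.exp (-w)) *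
        ENNReal.ofReal (heatKernel d u (x - y) * heatKernel d v (x' - z) *
          Real.exp (-‖x - x'‖ ^ 2 / (4 * w))) := by
      intro x x'
      rw [← ENNReal.ofReal_mul hc]
      congr 1
      ring
    simp_rw [hpt, lintegral_const_mul' _ _ ENNReal.ofReal_ne_top]
    rfl
  -- the two rpow integrals
  have int1 : ∫⁻ w in Set.Ioc (0:ℝ) ((u+v)/4),
        ENNReal.ofReal ((4/(u+v)) ^ ((d:ℝ)/2) * w ^ (α/2 - 1))
      = ENNReal.ofReal ((4/(u+v)) ^ ((d:ℝ)/2) * (((u+v)/4) ^ (α/2) / (α/2))) := by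
    have hs : (-1:ℝ) < α/2 - 1 := by linarith
    have hInt : IntegrableOn (fun w : ℝ => w ^ (α/2 - 1)) (Set.Ioc 0 ((u+v)/4)) volume := by
      have h := intervalIntegral.intervalIntegrable_rpow' (a := 0) (b := (u+v)/4) hs
      rwa [intervalIntegrable_iff_integrableOn_Ioc_of_le ht4.le] at h
    have hnn : 0 ≤ᵐ[volume.restrict (Set.Ioc (0:ℝ) ((u+v)/4))] fun w : ℝ => w ^ (α/2 - 1) :=
      (ae_restrict_mem measurableSet_Ioc).mono fun w hw => Real.rpow_nonneg hw.1.le _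
    have hval : ∫ w in Set.Ioc (0:ℝ) ((u+v)/4), w ^ (α/2 - 1) = ((u+v)/4) ^ (α/2) / (α/2) := by
      rw [← intervalIntegral.integral_of_le ht4.le, integral_rpow (Or.inl hs),
        show α/2 - 1 + 1 = α/2 by ring, Real.zero_rpow (half_pos hα0).ne', sub_zero]
    have h4t : (0:ℝ) ≤ (4/(u+v)) ^ ((d:ℝ)/2) :=
      Real.rpow_nonneg (div_nonneg (by norm_num) ht.le) _
    simp_rw [ENNReal.ofReal_mul h4t]
    rw [lintegral_const_mul' _ _ ENNReal.ofReal_ne_top,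
      ← ofReal_integral_eq_lintegral_ofReal hInt hnn, hval,
      ← ENNReal.ofReal_mul h4t]
  have int2 : ∫⁻ w in Set.Ioi ((u+v)/4), ENNReal.ofReal (w ^ ((α - (d:ℝ))/2 - 1))
      = ENNReal.ofReal (-((u+v)/4) ^ (((α - (d:ℝ))/2 - 1) + 1) / (((α - (d:ℝ))/2 - 1) + 1)) := by
    rw [← ofReal_integral_eq_lintegral_ofReal (integrableOn_Ioi_rpow_of_lt hβ ht4)
      ((ae_restrict_mem measurableSet_Ioi).mono fun w hw =>
        Real.rpow_nonneg (ht4.trans hw).le _),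
      integral_Ioi_rpow_of_lt hβ ht4]
  -- algebraic identities
  have hpowne : ((u+v)/4) ^ ((d:ℝ)/2) ≠ 0 := (Real.rpow_pos_of_pos ht4 _).ne'
  have e1 : (4/(u+v)) ^ ((d:ℝ)/2) * (((u+v)/4) ^ (α/2) / (α/2))
      = ((u+v)/4) ^ ((α - (d:ℝ))/2) * (2/α) := by
    rw [show (4/(u+v) : ℝ) = ((u+v)/4)⁻¹ by rw [inv_div],
      Real.inv_rpow ht4.le,
      show (α - (d:ℝ))/2 = α/2 - (d:ℝ)/2 by ring,
      Real.rpow_sub ht4]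
    field_simp
  have e2 : -((u+v)/4) ^ (((α - (d:ℝ))/2 - 1) + 1) / (((α - (d:ℝ))/2 - 1) + 1)
      = ((u+v)/4) ^ ((α - (d:ℝ))/2) * (2/((d:ℝ)-α)) := by
    rw [show ((α - (d:ℝ))/2 - 1) + 1 = (α - (d:ℝ))/2 by ring]
    rw [div_eq_iff (by intro h; apply hdα.ne'; linarith [h] : ((α - (d:ℝ))/2) ≠ 0)]
    field_simp
    ring
  have e3 : ((u+v)/4) ^ ((α - (d:ℝ))/2) =
      4 ^ (((d:ℝ) - α)/2) * (u+v) ^ (-((d:ℝ) - α) / 2) := by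
    rw [Real.div_rpow ht.le (by norm_num : (0:ℝ) ≤ 4), div_eq_mul_inv,
      ← Real.rpow_neg (by norm_num : (0:ℝ) ≤ 4),
      show -((α - (d:ℝ))/2) = ((d:ℝ) - α)/2 by ring,
      show (α - (d:ℝ))/2 = -((d:ℝ) - α) / 2 by ring]
    ring
  have hT' : 0 ≤ ((u+v)/4) ^ ((α - (d:ℝ))/2) := Real.rpow_nonneg ht4.le _
  -- main chain
  calc Jf d (besselKernel d α) u v y z
      ≤ ENNReal.ofReal ((4 * Real.pi) ^ (α / 2) * Real.Gamma (α / 2)) *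
        ∫⁻ x, ∫⁻ x', ∫⁻ w in Set.Ioi (0:ℝ), ENNReal.ofReal (heatKernel d u (x - y) * heatKernel d v (x' - z) * (w ^ ((α - (d : ℝ)) / 2 - 1) * Real.exp (-w) * Real.exp (-‖x - x'‖ ^ 2 / (4 * w)))) := step1
    _ = ENNReal.ofReal ((4 * Real.pi) ^ (α / 2) * Real.Gamma (α / 2)) *
        ∫⁻ w in Set.Ioi (0:ℝ), ∫⁻ x, ∫⁻ x', ENNReal.ofReal (heatKernel d u (x - y) * heatKernel d v (x' - z) * (w ^ ((α - (d : ℝ)) / 2 - 1) * Real.exp (-w) * Real.exp (-‖x - x'‖ ^ 2 / (4 * w)))) := by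
        rw [lintegral_congr swap_inner, swap_outer]
    _ = ENNReal.ofReal ((4 * Real.pi) ^ (α / 2) * Real.Gamma (α / 2)) *
        ∫⁻ w in Set.Ioi (0:ℝ),
          ENNReal.ofReal (w ^ ((α - (d : ℝ)) / 2 - 1) * Real.exp (-w)) *
            Kfun d u v w y z := by
        congr 1
        exact setLIntegral_congr_fun measurableSet_Ioi
          (fun w hw => inner_eq w hw)
    _ ≤ ENNReal.ofReal ((4 * Real.pi) ^ (α / 2) * Real.Gamma (α / 2)) *
        ((∫⁻ w in Set.Ioc (0:ℝ) ((u+v)/4),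
            ENNReal.ofReal ((4/(u+v)) ^ ((d:ℝ)/2) * w ^ (α/2 - 1))) +
          ∫⁻ w in Set.Ioi ((u+v)/4), ENNReal.ofReal (w ^ ((α - (d:ℝ))/2 - 1))) := by
        refine mul_le_mul_right ?_ _
        rw [← Set.Ioc_union_Ioi_eq_Ioi ht4.le,
          lintegral_union measurableSet_Ioi Set.Ioc_disjoint_Ioi_same]
        refine add_le_add (setLIntegral_mono ?_ ?_) (setLIntegral_mono ?_ ?_)
        · exact ENNReal.measurable_ofReal.comp ((measurable_id.pow_const _).const_mul _)
        · intro w hw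
          have hw0 : 0 < w := hw.1
          have hcw : ENNReal.ofReal (w ^ ((α - (d : ℝ)) / 2 - 1) * Real.exp (-w)) ≤
              ENNReal.ofReal (w ^ ((α - (d : ℝ)) / 2 - 1)) :=
            ENNReal.ofReal_le_ofReal (mul_le_of_le_one_right
              (Real.rpow_nonneg hw0.le _) (exp_le_one_of_nonpos (by linarith)))
          calc ENNReal.ofReal (w ^ ((α - (d : ℝ)) / 2 - 1) * Real.exp (-w)) *
                Kfun d u v w y z
              ≤ ENNReal.ofReal (w ^ ((α - (d : ℝ)) / 2 - 1)) *
                ENNReal.ofReal ((4 * w / (u + v)) ^ ((d:ℝ)/2)) :=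
                mul_le_mul' hcw ((HK w hw0).trans (min_le_right _ _))
            _ = ENNReal.ofReal ((4/(u+v)) ^ ((d:ℝ)/2) * w ^ (α/2 - 1)) := by
                rw [← ENNReal.ofReal_mul (Real.rpow_nonneg hw0.le _)]
                congr 1
                rw [show (4 * w/(u+v) : ℝ) = (4/(u+v)) * w by ring,
                  Real.mul_rpow (div_nonneg (by norm_num) ht.le) hw0.le,
                  show α/2 - 1 = ((α - (d:ℝ))/2 - 1) + (d:ℝ)/2 by ring,
                  Real.rpow_add hw0]
                ring
        · exact ENNReal.measurable_ofReal.comp (measurable_id.pow_const _)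
        · intro w hw
          have hw0 : 0 < w := ht4.trans hw
          have hcw : ENNReal.ofReal (w ^ ((α - (d : ℝ)) / 2 - 1) * Real.exp (-w)) ≤
              ENNReal.ofReal (w ^ ((α - (d : ℝ)) / 2 - 1)) :=
            ENNReal.ofReal_le_ofReal (mul_le_of_le_one_right
              (Real.rpow_nonneg hw0.le _) (exp_le_one_of_nonpos (by linarith)))
          calc ENNReal.ofReal (w ^ ((α - (d : ℝ)) / 2 - 1) * Real.exp (-w)) *
                Kfun d u v w y z
              ≤ ENNReal.ofReal (w ^ ((α - (d : ℝ)) / 2 - 1)) * 1 :=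
                mul_le_mul' hcw ((HK w hw0).trans (min_le_left _ _))
            _ = ENNReal.ofReal (w ^ ((α - (d : ℝ)) / 2 - 1)) := mul_one _
    _ = ENNReal.ofReal (((4 * Real.pi) ^ (α / 2) * Real.Gamma (α / 2)) *
          (4 ^ (((d : ℝ) - α) / 2) * (2 / α + 2 / ((d : ℝ) - α))) *
          (u + v) ^ (-((d : ℝ) - α) / 2)) := by
        rw [int1, int2, e1, e2,
          ← ENNReal.ofReal_add (mul_nonneg hT' (div_nonneg (by norm_num) hα0.le))
            (mul_nonneg hT' (div_nonneg (by norm_num) hdα.le)),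
          ← ENNReal.ofReal_mul hγpos.le]
        congr 1
        rw [e3]
        ring
end Aux
end

section
/- Let d ≥ 1 be an integer and 0 < α < d. Then for every x > 0: ∫₀^∞ w^{α/2−1} e^{−w} (w+x)^{−d/2} dw ≤ K_{α,d} · x^{−(d−α)/2}, where K_{α,d} = 2d/(α(d−α)). -/
open MeasureTheory

/-- For `0 < α < d` and `x > 0`:
`∫₀^∞ w^{α/2-1} e^{-w} (w+x)^{-d/2} dw ≤ K_{α,d} x^{-(d-α)/2}` with
`K_{α,d} = 2d/(α(d-α))`. -/
theorem integral_bound_I_alpha_d (d : ℕ) (hd : 1 ≤ d) (α : ℝ) (hα0 : 0 < α) (hαd : α < d)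
    (x : ℝ) (hx : 0 < x) :
    ∫⁻ w in Set.Ioi (0 : ℝ),
        ENNReal.ofReal (w ^ (α / 2 - 1) * Real.exp (-w) * (w + x) ^ (-(d : ℝ) / 2))
      ≤ ENNReal.ofReal ((2 * d / (α * ((d : ℝ) - α))) * x ^ (-((d : ℝ) - α) / 2)) := by
  have hβ : (0 : ℝ) < (d : ℝ) - α := by linarith
  have hxn : (0 : ℝ) ≤ x := hx.le
  have hdn : (0 : ℝ) ≤ (d : ℝ) := Nat.cast_nonneg d
  have hq : -(d : ℝ) / 2 ≤ 0 := by linarith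
  -- first piece : over Ioc 0 x
  have key1 : ∫⁻ w in Set.Ioc (0 : ℝ) x,
      ENNReal.ofReal (w ^ (α / 2 - 1) * Real.exp (-w) * (w + x) ^ (-(d : ℝ) / 2))
      ≤ ENNReal.ofReal ((2 / α) * x ^ (-((d : ℝ) - α) / 2)) := by
    have hle : ∀ w ∈ Set.Ioc (0 : ℝ) x,
        w ^ (α / 2 - 1) * Real.exp (-w) * (w + x) ^ (-(d : ℝ) / 2)
          ≤ w ^ (α / 2 - 1) * x ^ (-(d : ℝ) / 2) := by
      intro w hw
      have hw0 : 0 < w := hw.1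
      have h1 : Real.exp (-w) ≤ 1 := Real.exp_le_one_iff.mpr (by linarith)
      have h2 : (w + x) ^ (-(d : ℝ) / 2) ≤ x ^ (-(d : ℝ) / 2) :=
        Real.rpow_le_rpow_of_nonpos hx (by linarith) hq
      calc w ^ (α / 2 - 1) * Real.exp (-w) * (w + x) ^ (-(d : ℝ) / 2)
          ≤ w ^ (α / 2 - 1) * 1 * x ^ (-(d : ℝ) / 2) := by
            gcongr <;> positivity
        _ = w ^ (α / 2 - 1) * x ^ (-(d : ℝ) / 2) := by ring
    have hintg : IntegrableOn (fun w : ℝ => w ^ (α / 2 - 1) * x ^ (-(d : ℝ) / 2))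
        (Set.Ioc (0 : ℝ) x) := by
      refine (intervalIntegrable_iff_integrableOn_Ioc_of_le hxn).mp ?_
      exact (intervalIntegral.intervalIntegrable_rpow' (by linarith)).mul_const _
    calc ∫⁻ w in Set.Ioc (0 : ℝ) x,
        ENNReal.ofReal (w ^ (α / 2 - 1) * Real.exp (-w) * (w + x) ^ (-(d : ℝ) / 2))
        ≤ ∫⁻ w in Set.Ioc (0 : ℝ) x,
            ENNReal.ofReal (w ^ (α / 2 - 1) * x ^ (-(d : ℝ) / 2)) := by
          refine setLIntegral_mono ?_ fun w hw => ENNReal.ofReal_le_ofReal (hle w hw)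
          fun_prop
      _ = ENNReal.ofReal (∫ w in Set.Ioc (0 : ℝ) x,
            w ^ (α / 2 - 1) * x ^ (-(d : ℝ) / 2)) := by
          rw [ofReal_integral_eq_lintegral_ofReal hintg]
          exact (ae_restrict_iff' measurableSet_Ioc).mpr <|
            Filter.Eventually.of_forall fun w hw => by
              have := hw.1; positivity
      _ ≤ ENNReal.ofReal ((2 / α) * x ^ (-((d : ℝ) - α) / 2)) := by
          apply ENNReal.ofReal_le_ofReal
          rw [integral_mul_const, ← intervalIntegral.integral_of_le hxn,
            integral_rpow (Or.inl (by linarith : (-1 : ℝ) < α / 2 - 1))]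
          rw [show α / 2 - 1 + 1 = α / 2 by ring,
            Real.zero_rpow (by positivity : (0:ℝ) < α / 2).ne']
          rw [show (x ^ (α / 2) - 0) / (α / 2) * x ^ (-(d : ℝ) / 2)
              = (2 / α) * (x ^ (α / 2) * x ^ (-(d : ℝ) / 2)) by field_simp; ring]
          rw [← Real.rpow_add hx, show α / 2 + -(d : ℝ) / 2 = -((d : ℝ) - α) / 2 by ring]
  -- second piece : over Ioi x
  have key2 : ∫⁻ w in Set.Ioi x,
      ENNReal.ofReal (w ^ (α / 2 - 1) * Real.exp (-w) * (w + x) ^ (-(d : ℝ) / 2))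
      ≤ ENNReal.ofReal ((2 / ((d : ℝ) - α)) * x ^ (-((d : ℝ) - α) / 2)) := by
    have hr : (α - (d : ℝ)) / 2 - 1 < -1 := by linarith
    have hle : ∀ w ∈ Set.Ioi x,
        w ^ (α / 2 - 1) * Real.exp (-w) * (w + x) ^ (-(d : ℝ) / 2)
          ≤ w ^ ((α - (d : ℝ)) / 2 - 1) := by
      intro w hw
      have hw0 : 0 < w := lt_trans hx hw
      have h1 : Real.exp (-w) ≤ 1 := Real.exp_le_one_iff.mpr (by linarith)
      have h2 : (w + x) ^ (-(d : ℝ) / 2) ≤ w ^ (-(d : ℝ) / 2) :=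
        Real.rpow_le_rpow_of_nonpos hw0 (by linarith) hq
      calc w ^ (α / 2 - 1) * Real.exp (-w) * (w + x) ^ (-(d : ℝ) / 2)
          ≤ w ^ (α / 2 - 1) * 1 * w ^ (-(d : ℝ) / 2) := by
            gcongr <;> positivity
        _ = w ^ (α / 2 - 1) * w ^ (-(d : ℝ) / 2) := by ring
        _ = w ^ ((α - (d : ℝ)) / 2 - 1) := by
            rw [← Real.rpow_add hw0]
            congr 1
            ring
    have hintg : IntegrableOn (fun w : ℝ => w ^ ((α - (d : ℝ)) / 2 - 1)) (Set.Ioi x) :=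
      integrableOn_Ioi_rpow_of_lt hr hx
    calc ∫⁻ w in Set.Ioi x,
        ENNReal.ofReal (w ^ (α / 2 - 1) * Real.exp (-w) * (w + x) ^ (-(d : ℝ) / 2))
        ≤ ∫⁻ w in Set.Ioi x, ENNReal.ofReal (w ^ ((α - (d : ℝ)) / 2 - 1)) := by
          refine setLIntegral_mono ?_ fun w hw => ENNReal.ofReal_le_ofReal (hle w hw)
          fun_prop
      _ = ENNReal.ofReal (∫ w in Set.Ioi x, w ^ ((α - (d : ℝ)) / 2 - 1)) := by
          rw [ofReal_integral_eq_lintegral_ofReal hintg]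
          exact (ae_restrict_iff' measurableSet_Ioi).mpr <|
            Filter.Eventually.of_forall fun w hw => by
              have hw0 : 0 < w := lt_trans hx hw; positivity
      _ ≤ ENNReal.ofReal ((2 / ((d : ℝ) - α)) * x ^ (-((d : ℝ) - α) / 2)) := by
          apply ENNReal.ofReal_le_ofReal
          rw [integral_Ioi_rpow_of_lt hr hx,
            show (α - (d : ℝ)) / 2 - 1 + 1 = -((d : ℝ) - α) / 2 by ring]
          apply le_of_eq
          rw [show -((d : ℝ) - α) / 2 = -(((d : ℝ) - α) / 2) by ring, div_neg, neg_div, neg_neg,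
            div_div_eq_mul_div]
          ring
  -- combine
  have hsplit : Set.Ioi (0 : ℝ) = Set.Ioc 0 x ∪ Set.Ioi x :=
    (Set.Ioc_union_Ioi_eq_Ioi hxn).symm
  rw [hsplit, lintegral_union measurableSet_Ioi Set.Ioc_disjoint_Ioi_same]
  calc _ ≤ ENNReal.ofReal ((2 / α) * x ^ (-((d : ℝ) - α) / 2))
        + ENNReal.ofReal ((2 / ((d : ℝ) - α)) * x ^ (-((d : ℝ) - α) / 2)) :=
        add_le_add key1 key2
    _ = ENNReal.ofReal ((2 / α) * x ^ (-((d : ℝ) - α) / 2)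
        + (2 / ((d : ℝ) - α)) * x ^ (-((d : ℝ) - α) / 2)) := by
        rw [← ENNReal.ofReal_add (by positivity) (by positivity)]
    _ = ENNReal.ofReal ((2 * d / (α * ((d : ℝ) - α))) * x ^ (-((d : ℝ) - α) / 2)) := by
        congr 1
        rw [show (2 / α) * x ^ (-((d : ℝ) - α) / 2)
            + (2 / ((d : ℝ) - α)) * x ^ (-((d : ℝ) - α) / 2)
            = (2 / α + 2 / ((d : ℝ) - α)) * x ^ (-((d : ℝ) - α) / 2) by ring]
        congr 1
        field_simp
        ring
end

section
/- Let H ∈ (1/2, 1), set α_H = H(2H−1), and suppose β > 0 is a constant such that for every nonnegative φ ∈ L^{1/H}(ℝ₊): α_H ∫₀^∞∫₀^∞ φ(s) φ(t) |t−s|^{2H−2} ds dt ≤ β² (∫₀^∞ φ(t)^{1/H} dt)^{2H}. Then for every integer n ≥ 1 and every nonnegative φ ∈ L^{1/H}(ℝ₊^n): α_H^n ∫_{ℝ₊^{2n}} φ(𝐬) φ(𝐭) ∏_{j=1}^n |t_j−s_j|^{2H−2} d𝐬 d𝐭 ≤ β^{2n} (∫_{ℝ₊^n} φ(𝐭)^{1/H}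 d𝐭)^{2H}. -/
open MeasureTheory

set_option maxHeartbeats 1000000

open MeasureTheory Set
open scoped ENNReal

noncomputable section TensorAux

namespace TensorAux

/-- auxiliary kernel `k(u,s) = (s-u)_+^{H-3/2}` -/
def kk (H u s : ℝ) : ℝ≥0∞ := ENNReal.ofReal ((max (s - u) 0) ^ (H - 3/2))

/-- normalizing constant -/
def CH (H : ℝ) : ℝ≥0∞ := ∫⁻ w in Ioi (0:ℝ), ENNReal.ofReal (w ^ (H - 3/2) * (1+w) ^ (H - 3/2))

lemma measurable_kk (H : ℝ) : Measurable (fun p : ℝ × ℝ => kk H p.1 p.2) := by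
  unfold kk; fun_prop

lemma kk_eq_zero {H u s : ℝ} (hH : H < 1) (h : s ≤ u) : kk H u s = 0 := by
  have : max (s - u) 0 = 0 := max_eq_right (by linarith)
  rw [kk, this, Real.zero_rpow (by norm_num; intro h; linarith), ENNReal.ofReal_zero]

lemma kk_of_lt {H u s : ℝ} (h : u < s) : kk H u s = ENNReal.ofReal ((s - u) ^ (H - 3/2)) := by
  rw [kk, max_eq_left (by linarith)]

/-- change of variables: the representation identity -/
lemma rep_lt (H : ℝ) (hH : 1/2 < H) (hH1 : H < 1) {s t : ℝ} (hst : s < t) :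
    ∫⁻ u, kk H u s * kk H u t = CH H * ENNReal.ofReal (|t - s| ^ (2*H-2)) := by
  set γ := H - 3/2 with hγ
  set a := t - s with ha
  have ha0 : 0 < a := by simp [ha]; linarith
  set ψ : ℝ → ℝ := fun w => s + (-a) * w with hψ
  have hmap : Measure.map ψ volume = ENNReal.ofReal a⁻¹ • volume := by
    have h1 : Measure.map (fun x : ℝ => (-a) * x) volume
        = ENNReal.ofReal |(-a)⁻¹| • volume := Real.map_volume_mul_left (by linarith)
    have h2 : ψ = (fun x : ℝ => s + x) ∘ (fun x : ℝ => (-a) * x) := rfl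
    rw [h2, ← Measure.map_map (measurable_const_add s) (by fun_prop), h1,
      Measure.map_smul, map_add_left_eq_self]
    congr 1
    rw [abs_inv, abs_neg, abs_of_pos ha0]
  have hg : Measurable (fun u => kk H u s * kk H u t) := by unfold kk; fun_prop
  have key0 : ∫⁻ w, kk H (ψ w) s * kk H (ψ w) t
      = ENNReal.ofReal a⁻¹ * ∫⁻ u, kk H u s * kk H u t := by
    rw [← lintegral_map hg (by fun_prop : Measurable ψ), hmap, lintegral_smul_measure, smul_eq_mul]
  have key : ∫⁻ u, kk H u s * kk H u t
      = ENNReal.ofReal a * ∫⁻ w, kk H (ψ w) s * kk H (ψ w) t := by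
    rw [key0, ← mul_assoc, ← ENNReal.ofReal_mul ha0.le, mul_inv_cancel₀ ha0.ne',
      ENNReal.ofReal_one, one_mul]
  rw [key]
  have hval : ∀ w : ℝ, kk H (ψ w) s * kk H (ψ w) t
      = (Ioi (0:ℝ)).indicator
        (fun w => ENNReal.ofReal (a ^ (2*γ)) * ENNReal.ofReal (w ^ γ * (1+w) ^ γ)) w := by
    intro w
    rcases le_or_gt w 0 with hw | hw
    · rw [indicator_of_notMem (by simpa using hw)]
      have : s ≤ ψ w := by simp only [hψ]; nlinarith
      rw [kk_eq_zero hH1 this, zero_mul]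
    · rw [indicator_of_mem (mem_Ioi.2 hw)]
      have h1 : ψ w < s := by simp only [hψ]; nlinarith
      have h2 : ψ w < t := by linarith
      rw [kk_of_lt h1, kk_of_lt h2]
      have e1 : s - ψ w = a * w := by simp only [hψ]; ring
      have e2 : t - ψ w = a * (1 + w) := by simp only [hψ, ha]; ring
      rw [e1, e2, Real.mul_rpow ha0.le hw.le, Real.mul_rpow ha0.le (by linarith)]
      rw [← ENNReal.ofReal_mul (by positivity), ← ENNReal.ofReal_mul (by positivity)]
      congr 1
      have : a ^ (2*γ) = a ^ γ * a ^ γ := by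
        rw [← Real.rpow_add ha0]; ring_nf
      rw [this]; ring
  rw [lintegral_congr hval, lintegral_indicator measurableSet_Ioi,
    lintegral_const_mul' _ _ ENNReal.ofReal_ne_top]
  rw [← CH, abs_of_pos (by linarith : (0:ℝ) < t - s), ← ha]
  rw [← mul_assoc, ← ENNReal.ofReal_mul ha0.le, mul_comm (CH H)]
  congr 2
  have : a * a ^ (2*γ) = a ^ (1 + 2*γ) := by
    rw [Real.rpow_add ha0, Real.rpow_one]
  rw [this]; congr 1; rw [hγ]; ring

lemma rep (H : ℝ) (hH : 1/2 < H) (hH1 : H < 1) {s t : ℝ} (hst : s ≠ t) :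
    ∫⁻ u, kk H u s * kk H u t = CH H * ENNReal.ofReal (|t - s| ^ (2*H-2)) := by
  rcases hst.lt_or_gt with h | h
  · exact rep_lt H hH hH1 h
  · have := rep_lt H hH hH1 h
    simpa [mul_comm, abs_sub_comm] using this


lemma CH_lt_top (H : ℝ) (hH : 1/2 < H) (hH1 : H < 1) : CH H < ⊤ := by
  set γ := H - 3/2 with hγ
  have hγ1 : -1 < γ := by rw [hγ]; linarith
  have hγ0 : γ < 0 := by rw [hγ]; linarith
  have hint : IntegrableOn (fun w : ℝ => w ^ γ * (1+w) ^ γ) (Ioi 0) := by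
    have h1 : IntegrableOn (fun w : ℝ => w ^ γ * (1+w) ^ γ) (Ioo 0 1) := by
      have hb : IntegrableOn (fun w : ℝ => w ^ γ) (Ioo (0:ℝ) 1) :=
        (intervalIntegral.integrableOn_Ioo_rpow_iff zero_lt_one).2 hγ1
      refine hb.mono' ((by fun_prop : Measurable fun w : ℝ => w ^ γ * (1+w) ^ γ)).aestronglyMeasurable ?_
      filter_upwards [ae_restrict_mem measurableSet_Ioo] with w hw
      have hw0 : 0 < w := hw.1
      rw [Real.norm_eq_abs, abs_of_nonneg (by positivity)]
      have : (1+w) ^ γ ≤ 1 := Real.rpow_le_one_of_one_le_of_nonpos (by linarith) hγ0.le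
      nlinarith [Real.rpow_nonneg hw0.le γ, Real.rpow_nonneg (by linarith : (0:ℝ) ≤ 1+w) γ]
    have h2 : IntegrableOn (fun w : ℝ => w ^ γ * (1+w) ^ γ) (Ici 1) := by
      have hb : IntegrableOn (fun w : ℝ => w ^ (γ + γ)) (Ioi (1:ℝ)) :=
        integrableOn_Ioi_rpow_of_lt (by rw [hγ]; linarith) zero_lt_one
      rw [integrableOn_Ici_iff_integrableOn_Ioi]
      refine hb.mono' ((by fun_prop : Measurable fun w : ℝ => w ^ γ * (1+w) ^ γ)).aestronglyMeasurable ?_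
      filter_upwards [ae_restrict_mem measurableSet_Ioi] with w hw
      have hw1 : (1:ℝ) < w := hw
      have hw0 : 0 < w := by linarith
      rw [Real.norm_eq_abs, abs_of_nonneg (by positivity), Real.rpow_add hw0]
      have : (1+w) ^ γ ≤ w ^ γ :=
        Real.rpow_le_rpow_of_nonpos hw0 (by linarith) hγ0.le
      nlinarith [Real.rpow_nonneg hw0.le γ]
    have : IntegrableOn (fun w : ℝ => w ^ γ * (1+w) ^ γ) (Ioo 0 1 ∪ Ici 1) := h1.union h2
    refine this.mono ?_ le_rfl
    intro x hx
    rcases lt_or_ge x 1 with h | h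
    · exact Or.inl ⟨hx, h⟩
    · exact Or.inr h
  have := ofReal_integral_eq_lintegral_ofReal hint
    (by filter_upwards [ae_restrict_mem measurableSet_Ioi] with w hw;
        have : (0:ℝ) < w := hw; positivity)
  rw [CH, ← this]
  exact ENNReal.ofReal_lt_top

lemma CH_pos (H : ℝ) (hH : 1/2 < H) (hH1 : H < 1) : 0 < CH H := by
  set γ := H - 3/2 with hγ
  have hγ0 : γ < 0 := by rw [hγ]; linarith
  have hlow : ∀ w ∈ Ioc (1:ℝ) 2,
      ENNReal.ofReal (2 ^ γ * 3 ^ γ) ≤ ENNReal.ofReal (w ^ γ * (1+w) ^ γ) := by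
    intro w hw
    apply ENNReal.ofReal_le_ofReal
    have h1 : (2:ℝ) ^ γ ≤ w ^ γ := Real.rpow_le_rpow_of_nonpos (by linarith [hw.1]) hw.2 hγ0.le
    have h2 : (3:ℝ) ^ γ ≤ (1+w) ^ γ :=
      Real.rpow_le_rpow_of_nonpos (by linarith [hw.1]) (by linarith [hw.2]) hγ0.le
    have := Real.rpow_nonneg (by norm_num : (0:ℝ) ≤ 2) γ
    have := Real.rpow_nonneg (by norm_num : (0:ℝ) ≤ 3) γ
    have := Real.rpow_nonneg (by linarith [hw.1] : (0:ℝ) ≤ 1+w) γ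
    nlinarith
  have : ENNReal.ofReal (2 ^ γ * 3 ^ γ) * volume (Ioc (1:ℝ) 2) ≤ CH H := by
    rw [CH]
    calc ENNReal.ofReal (2 ^ γ * 3 ^ γ) * volume (Ioc (1:ℝ) 2)
        = ∫⁻ _ in Ioc (1:ℝ) 2, ENNReal.ofReal (2 ^ γ * 3 ^ γ) := by
          rw [setLIntegral_const]
      _ ≤ ∫⁻ w in Ioc (1:ℝ) 2, ENNReal.ofReal (w ^ γ * (1+w) ^ γ) :=
          setLIntegral_mono (by fun_prop) hlow
      _ ≤ ∫⁻ w in Ioi (0:ℝ), ENNReal.ofReal (w ^ γ * (1+w) ^ γ) :=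
          lintegral_mono_set (fun x hx => lt_trans zero_lt_one hx.1)
  refine lt_of_lt_of_le ?_ this
  rw [Real.volume_Ioc]
  apply ENNReal.mul_pos
  · simp only [ne_eq, ENNReal.ofReal_eq_zero, not_le]
    positivity
  · simp

/-- the 1-d bilinear form -/
def B1 (H : ℝ) (f g : ℝ → ℝ≥0∞) : ℝ≥0∞ :=
  ∫⁻ s in Ioi (0:ℝ), ∫⁻ t in Ioi (0:ℝ), f s * g t * ENNReal.ofReal (|t - s| ^ (2*H-2))

def T (H : ℝ) (f : ℝ → ℝ≥0∞) (u : ℝ) : ℝ≥0∞ := ∫⁻ s in Ioi (0:ℝ), f s * kk H u s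

lemma measurable_T (H : ℝ) {f : ℝ → ℝ≥0∞} (hf : Measurable f) : Measurable (T H f) := by
  have : Measurable (fun p : ℝ × ℝ => f p.2 * kk H p.1 p.2) :=
    (hf.comp measurable_snd).mul (measurable_kk H)
  exact this.lintegral_prod_right'

lemma ae_ne (s : ℝ) : ∀ᵐ t ∂(volume.restrict (Ioi (0:ℝ))), t ≠ s := by
  refine ae_restrict_of_ae ?_
  rw [ae_iff]
  have : {t : ℝ | ¬ t ≠ s} = {s} := by ext t; simp [eq_comm]
  rw [this]
  exact Real.volume_singleton

lemma TT (H : ℝ) (hH : 1/2 < H) (hH1 : H < 1) {f g : ℝ → ℝ≥0∞}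
    (hf : Measurable f) (hg : Measurable g) :
    CH H * B1 H f g = ∫⁻ u, T H f u * T H g u := by
  have hkk := measurable_kk H
  calc CH H * B1 H f g
      = ∫⁻ s in Ioi (0:ℝ), ∫⁻ t in Ioi (0:ℝ),
          f s * g t * (CH H * ENNReal.ofReal (|t - s| ^ (2*H-2))) := by
        rw [B1, ← lintegral_const_mul' _ _ (CH_lt_top H hH hH1).ne]
        refine lintegral_congr fun s => ?_
        rw [← lintegral_const_mul' _ _ (CH_lt_top H hH hH1).ne]
        exact lintegral_congr fun t => by ring
    _ = ∫⁻ s in Ioi (0:ℝ), ∫⁻ t in Ioi (0:ℝ),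
          f s * g t * ∫⁻ u, kk H u s * kk H u t := by
        refine lintegral_congr fun s => lintegral_congr_ae ?_
        filter_upwards [ae_ne s] with t ht
        rw [rep H hH hH1 ht.symm]
    _ = ∫⁻ s in Ioi (0:ℝ), ∫⁻ t in Ioi (0:ℝ), ∫⁻ u,
          (f s * kk H u s) * (g t * kk H u t) := by
        refine lintegral_congr fun s => lintegral_congr fun t => ?_
        rw [← lintegral_const_mul (f s * g t)
          (by fun_prop : Measurable fun u => kk H u s * kk H u t)]
        exact lintegral_congr fun u => by ring
    _ = ∫⁻ s in Ioi (0:ℝ), ∫⁻ u, ∫⁻ t in Ioi (0:ℝ),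
          (f s * kk H u s) * (g t * kk H u t) := by
        refine lintegral_congr fun s => lintegral_lintegral_swap ?_
        apply Measurable.aemeasurable
        exact ((hf.comp measurable_const).mul ((hkk.comp (measurable_snd.prodMk
          measurable_const)))).mul ((hg.comp measurable_fst).mul
          (hkk.comp (measurable_snd.prodMk measurable_fst)))
    _ = ∫⁻ u, ∫⁻ s in Ioi (0:ℝ), ∫⁻ t in Ioi (0:ℝ),
          (f s * kk H u s) * (g t * kk H u t) := by
        refine lintegral_lintegral_swap ?_
        apply Measurable.aemeasurable
        have h : Measurable (fun q : (ℝ × ℝ) × ℝ =>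
            (f q.1.1 * kk H q.1.2 q.1.1) * (g q.2 * kk H q.1.2 q.2)) :=
          ((hf.comp (measurable_fst.comp measurable_fst)).mul
            (hkk.comp ((measurable_snd.comp measurable_fst).prodMk
              (measurable_fst.comp measurable_fst)))).mul
          ((hg.comp measurable_snd).mul
            (hkk.comp ((measurable_snd.comp measurable_fst).prodMk measurable_snd)))
        exact h.lintegral_prod_right' (ν := volume.restrict (Ioi (0:ℝ)))
    _ = ∫⁻ u, T H f u * T H g u := by
        refine lintegral_congr fun u => ?_
        rw [T, T, ← lintegral_mul_const _ (by fun_prop : Measurable fun s => f s * kk H u s)]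
        exact lintegral_congr fun s => by
          rw [← lintegral_const_mul _ (by fun_prop : Measurable fun t => g t * kk H u t)]

lemma rpow_two' (x : ℝ≥0∞) : x ^ (2:ℝ) = x * x := by
  rw [show (2:ℝ) = ((2:ℕ):ℝ) by norm_num, ENNReal.rpow_natCast]; ring

lemma CS (H : ℝ) (hH : 1/2 < H) (hH1 : H < 1) {f g : ℝ → ℝ≥0∞}
    (hf : Measurable f) (hg : Measurable g) :
    B1 H f g ≤ (B1 H f f) ^ (1/2:ℝ) * (B1 H g g) ^ (1/2:ℝ) := by
  have h2 : (2:ℝ).HolderConjugate 2 := Real.HolderConjugate.two_two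
  have key := ENNReal.lintegral_mul_le_Lp_mul_Lq volume h2
    (measurable_T H hf).aemeasurable (measurable_T H hg).aemeasurable
  simp only [Pi.mul_apply, rpow_two'] at key
  have hC0 := (CH_pos H hH hH1).ne'
  have hCt := (CH_lt_top H hH hH1).ne
  rw [← ENNReal.mul_le_mul_iff_right hC0 hCt]
  calc CH H * B1 H f g = ∫⁻ u, T H f u * T H g u := TT H hH hH1 hf hg
    _ ≤ (∫⁻ u, T H f u * T H f u) ^ (1/2:ℝ) * (∫⁻ u, T H g u * T H g u) ^ (1/2:ℝ) := key
    _ = (CH H * B1 H f f) ^ (1/2:ℝ) * (CH H * B1 H g g) ^ (1/2:ℝ) := by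
        rw [TT H hH hH1 hf hf, TT H hH hH1 hg hg]
    _ = CH H * ((B1 H f f) ^ (1/2:ℝ) * (B1 H g g) ^ (1/2:ℝ)) := by
        rw [ENNReal.mul_rpow_of_nonneg _ _ (by norm_num), ENNReal.mul_rpow_of_nonneg _ _ (by norm_num)]
        have : CH H ^ (1/2:ℝ) * CH H ^ (1/2:ℝ) = CH H := by
          rw [← ENNReal.rpow_add _ _ hC0 hCt]; norm_num
        calc CH H ^ (1/2:ℝ) * B1 H f f ^ (1/2:ℝ) * (CH H ^ (1/2:ℝ) * B1 H g g ^ (1/2:ℝ))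
            = (CH H ^ (1/2:ℝ) * CH H ^ (1/2:ℝ)) * (B1 H f f ^ (1/2:ℝ) * B1 H g g ^ (1/2:ℝ)) := by
              ring
          _ = _ := by rw [this]

section OneD

variable {H β : ℝ} (hH : 1/2 < H) (hH1 : H < 1) (hβ : 0 < β)

variable (hyp : ∀ φ : ℝ → ℝ, Measurable φ → (∀ a, 0 ≤ φ a) →
      Integrable (fun a => φ a ^ (1 / H)) (volume.restrict (Set.Ioi (0 : ℝ))) →
      (∫⁻ s in Set.Ioi (0 : ℝ), ∫⁻ t in Set.Ioi (0 : ℝ),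
          ENNReal.ofReal (H * (2 * H - 1) * (φ s * φ t * |t - s| ^ (2 * H - 2))))
        ≤ ENNReal.ofReal (β ^ 2 * (∫ a in Set.Ioi (0 : ℝ), φ a ^ (1 / H)) ^ (2 * H)))

include hH hH1 hβ hyp

lemma oneD {φ : ℝ → ℝ} (hm : Measurable φ) (hnn : ∀ a, 0 ≤ φ a)
    (hint : Integrable (fun a => φ a ^ (1 / H)) (volume.restrict (Set.Ioi (0 : ℝ)))) :
    ENNReal.ofReal (H * (2 * H - 1)) *
      B1 H (fun a => ENNReal.ofReal (φ a)) (fun a => ENNReal.ofReal (φ a))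
    ≤ ENNReal.ofReal β ^ 2 *
      (∫⁻ a in Ioi (0:ℝ), ENNReal.ofReal (φ a) ^ (1/H)) ^ (2*H) := by
  have hα : 0 ≤ H * (2 * H - 1) := by nlinarith
  have h := hyp φ hm hnn hint
  have hL : (∫⁻ s in Set.Ioi (0 : ℝ), ∫⁻ t in Set.Ioi (0 : ℝ),
      ENNReal.ofReal (H * (2 * H - 1) * (φ s * φ t * |t - s| ^ (2 * H - 2))))
      = ENNReal.ofReal (H * (2 * H - 1)) *
        B1 H (fun a => ENNReal.ofReal (φ a)) (fun a => ENNReal.ofReal (φ a)) := by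
    rw [B1, ← lintegral_const_mul' _ _ ENNReal.ofReal_ne_top]
    refine lintegral_congr fun s => ?_
    rw [← lintegral_const_mul' _ _ ENNReal.ofReal_ne_top]
    refine lintegral_congr fun t => ?_
    rw [ENNReal.ofReal_mul hα, ENNReal.ofReal_mul (mul_nonneg (hnn s) (hnn t)),
      ENNReal.ofReal_mul (hnn s)]
  have hI : 0 ≤ ∫ a in Set.Ioi (0 : ℝ), φ a ^ (1 / H) :=
    integral_nonneg fun a => Real.rpow_nonneg (hnn a) _
  have hR : ENNReal.ofReal (β ^ 2 * (∫ a in Set.Ioi (0 : ℝ), φ a ^ (1 / H)) ^ (2 * H))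
      = ENNReal.ofReal β ^ 2 *
        (∫⁻ a in Ioi (0:ℝ), ENNReal.ofReal (φ a) ^ (1/H)) ^ (2*H) := by
    rw [ENNReal.ofReal_mul (by positivity), ENNReal.ofReal_pow hβ.le,
      ← ENNReal.ofReal_rpow_of_nonneg hI (by linarith),
      ofReal_integral_eq_lintegral_ofReal hint
        (Filter.Eventually.of_forall fun a => Real.rpow_nonneg (hnn a) _)]
    congr 1
    refine congrArg (· ^ (2*H)) (lintegral_congr fun a => ?_)
    rw [ENNReal.ofReal_rpow_of_nonneg (hnn a) (by positivity)]
  rw [hL, hR] at h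
  exact h

lemma oneD2 {φ ψ : ℝ → ℝ} (hmφ : Measurable φ) (hnnφ : ∀ a, 0 ≤ φ a)
    (hintφ : Integrable (fun a => φ a ^ (1 / H)) (volume.restrict (Set.Ioi (0 : ℝ))))
    (hmψ : Measurable ψ) (hnnψ : ∀ a, 0 ≤ ψ a)
    (hintψ : Integrable (fun a => ψ a ^ (1 / H)) (volume.restrict (Set.Ioi (0 : ℝ)))) :
    ENNReal.ofReal (H * (2 * H - 1)) *
      B1 H (fun a => ENNReal.ofReal (φ a)) (fun a => ENNReal.ofReal (ψ a))
    ≤ ENNReal.ofReal β ^ 2 *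
      ((∫⁻ a in Ioi (0:ℝ), ENNReal.ofReal (φ a) ^ (1/H)) ^ H *
       (∫⁻ a in Ioi (0:ℝ), ENNReal.ofReal (ψ a) ^ (1/H)) ^ H) := by
  set α' := ENNReal.ofReal (H * (2 * H - 1)) with hα'
  have hα0 : α' ≠ 0 := by
    rw [hα']; simp only [ne_eq, ENNReal.ofReal_eq_zero, not_le]; nlinarith
  have hαt : α' ≠ ⊤ := ENNReal.ofReal_ne_top
  have hαsplit : α' = α' ^ (1/2:ℝ) * α' ^ (1/2:ℝ) := by
    rw [← ENNReal.rpow_add _ _ hα0 hαt]; norm_num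
  set X := ∫⁻ a in Ioi (0:ℝ), ENNReal.ofReal (φ a) ^ (1/H) with hX
  set Y := ∫⁻ a in Ioi (0:ℝ), ENNReal.ofReal (ψ a) ^ (1/H) with hY
  calc α' * B1 H (fun a => ENNReal.ofReal (φ a)) (fun a => ENNReal.ofReal (ψ a))
      ≤ α' * ((B1 H (fun a => ENNReal.ofReal (φ a)) (fun a => ENNReal.ofReal (φ a))) ^ (1/2:ℝ) *
              (B1 H (fun a => ENNReal.ofReal (ψ a)) (fun a => ENNReal.ofReal (ψ a))) ^ (1/2:ℝ)) :=
        mul_le_mul_right (CS H hH hH1 (by fun_prop) (by fun_prop)) _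
    _ = (α' * B1 H (fun a => ENNReal.ofReal (φ a)) (fun a => ENNReal.ofReal (φ a))) ^ (1/2:ℝ) *
        (α' * B1 H (fun a => ENNReal.ofReal (ψ a)) (fun a => ENNReal.ofReal (ψ a))) ^ (1/2:ℝ) := by
        rw [ENNReal.mul_rpow_of_nonneg _ _ (by norm_num : (0:ℝ) ≤ 1/2),
          ENNReal.mul_rpow_of_nonneg _ _ (by norm_num : (0:ℝ) ≤ 1/2)]
        nth_rewrite 1 [hαsplit]
        ring
    _ ≤ (ENNReal.ofReal β ^ 2 * X ^ (2*H)) ^ (1/2:ℝ) *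
        (ENNReal.ofReal β ^ 2 * Y ^ (2*H)) ^ (1/2:ℝ) := by
        exact mul_le_mul'
          (ENNReal.rpow_le_rpow (oneD hH hH1 hβ hyp hmφ hnnφ hintφ) (by norm_num))
          (ENNReal.rpow_le_rpow (oneD hH hH1 hβ hyp hmψ hnnψ hintψ) (by norm_num))
    _ = ENNReal.ofReal β ^ 2 * (X ^ H * Y ^ H) := by
        rw [ENNReal.mul_rpow_of_nonneg _ _ (by norm_num : (0:ℝ) ≤ 1/2),
          ENNReal.mul_rpow_of_nonneg _ _ (by norm_num : (0:ℝ) ≤ 1/2)]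
        have hb : (ENNReal.ofReal β ^ 2) ^ (1/2:ℝ) = ENNReal.ofReal β := by
          rw [← ENNReal.rpow_natCast (ENNReal.ofReal β) 2, ← ENNReal.rpow_mul]
          norm_num
        have hX2 : (X ^ (2*H)) ^ (1/2:ℝ) = X ^ H := by
          rw [← ENNReal.rpow_mul]; norm_num; ring_nf
        have hY2 : (Y ^ (2*H)) ^ (1/2:ℝ) = Y ^ H := by
          rw [← ENNReal.rpow_mul]; norm_num; ring_nf
        rw [hb, hX2, hY2]
        rw [sq]
        ring

end OneD

/-- positive orthant -/
def pin (n : ℕ) : Set (Fin n → ℝ) := Set.univ.pi fun _ => Ioi (0:ℝ)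

lemma measurableSet_pin (n : ℕ) : MeasurableSet (pin n) :=
  MeasurableSet.univ_pi fun _ => measurableSet_Ioi

def Kn (H : ℝ) (n : ℕ) (s t : Fin n → ℝ) : ℝ≥0∞ :=
  ∏ j, ENNReal.ofReal (|t j - s j| ^ (2*H-2))

lemma measurable_Kn (H : ℝ) (n : ℕ) :
    Measurable (fun p : (Fin n → ℝ) × (Fin n → ℝ) => Kn H n p.1 p.2) := by
  unfold Kn
  exact Finset.measurable_prod _ fun j _ => by fun_prop

lemma measurable_Kn' (H : ℝ) (n : ℕ) {δ : Type*} [MeasurableSpace δ] {f g : δ → Fin n → ℝ}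
    (hf : Measurable f) (hg : Measurable g) : Measurable (fun x => Kn H n (f x) (g x)) := by
  unfold Kn
  exact Finset.measurable_prod _ fun j _ => by fun_prop

lemma Kn_zero (H : ℝ) (s t : Fin 0 → ℝ) : Kn H 0 s t = 1 := by simp [Kn]

lemma Kn_cons (H : ℝ) (n : ℕ) (u v : ℝ) (y z : Fin n → ℝ) :
    Kn H (n+1) (Fin.cons u y) (Fin.cons v z)
      = ENNReal.ofReal (|v - u| ^ (2*H-2)) * Kn H n y z := by
  rw [Kn, Fin.prod_univ_succ]
  simp only [Fin.cons_zero, Fin.cons_succ]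
  rfl

lemma ofReal_prod_Kn (H : ℝ) (n : ℕ) (s t : Fin n → ℝ) :
    ENNReal.ofReal (∏ j, |t j - s j| ^ (2*H-2)) = Kn H n s t := by
  rw [Kn, ENNReal.ofReal_prod_of_nonneg]
  intro i _
  positivity

attribute [irreducible] Kn

def Bn (H : ℝ) (n : ℕ) (f g : (Fin n → ℝ) → ℝ≥0∞) : ℝ≥0∞ :=
  ∫⁻ s in pin n, ∫⁻ t in pin n, f s * g t * Kn H n s t

lemma measurable_cons {n : ℕ} :
    Measurable (fun p : ℝ × (Fin n → ℝ) => (Fin.cons p.1 p.2 : Fin (n+1) → ℝ)) := by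
  refine measurable_pi_iff.2 fun i => ?_
  refine Fin.cases ?_ (fun j => ?_) i
  · simpa using measurable_fst
  · simp only [Fin.cons_succ]; exact (measurable_pi_apply j).comp measurable_snd

section Transfer

variable {n : ℕ}

lemma e_symm_apply (u : ℝ) (y : Fin n → ℝ) :
    (MeasurableEquiv.piFinSuccAbove (fun _ : Fin (n+1) => ℝ) 0).symm (u, y)
      = Fin.cons u y := by
  simp [MeasurableEquiv.piFinSuccAbove_symm_apply, Fin.insertNthEquiv, Fin.insertNth_zero,
    Function.comp]

lemma e_measurePreserving :
    MeasurePreserving (MeasurableEquiv.piFinSuccAbove (fun _ : Fin (n+1) => ℝ) 0)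
      (volume.restrict (pin (n+1)))
      (((volume : Measure ℝ).restrict (Ioi (0:ℝ))).prod
        ((volume : Measure (Fin n → ℝ)).restrict (pin n))) := by
  have mp := measurePreserving_piFinSuccAbove (fun _ : Fin (n+1) => (volume : Measure ℝ)) 0
  have ms : MeasurableSet ((Ioi (0:ℝ)) ×ˢ pin n) :=
    measurableSet_Ioi.prod (measurableSet_pin n)
  have hpre : (MeasurableEquiv.piFinSuccAbove (fun _ : Fin (n+1) => ℝ) 0) ⁻¹'
      ((Ioi (0:ℝ)) ×ˢ pin n) = pin (n+1) := by
    ext x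
    simp only [mem_preimage, MeasurableEquiv.piFinSuccAbove_apply, mem_prod, pin, mem_pi,
      mem_univ, true_implies, Fin.insertNthEquiv, Equiv.coe_fn_symm_mk]
    simp only [Fin.removeNth]
    exact (Fin.forall_iff_succAbove (P := fun i => x i ∈ Ioi 0) (0 : Fin (n+1))).symm
  have h2 := mp.restrict_preimage ms
  rw [hpre, ← Measure.prod_restrict] at h2
  exact h2

lemma lintegral_pin_succ (F : (Fin (n+1) → ℝ) → ℝ≥0∞) (hF : Measurable F) :
    ∫⁻ x in pin (n+1), F x
      = ∫⁻ u in Ioi (0:ℝ), ∫⁻ y in pin n, F (Fin.cons u y) := by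
  set e := MeasurableEquiv.piFinSuccAbove (fun _ : Fin (n+1) => ℝ) 0 with he
  have mp := e_measurePreserving (n := n)
  calc ∫⁻ x in pin (n+1), F x
      = ∫⁻ z, F (e.symm z)
          ∂(((volume : Measure ℝ).restrict (Ioi (0:ℝ))).prod
            ((volume : Measure (Fin n → ℝ)).restrict (pin n))) :=
        ((mp.symm e).lintegral_comp hF).symm
    _ = ∫⁻ u in Ioi (0:ℝ), ∫⁻ y in pin n, F (e.symm (u, y)) :=
        lintegral_prod _ ((hF.comp e.symm.measurable).aemeasurable)
    _ = ∫⁻ u in Ioi (0:ℝ), ∫⁻ y in pin n, F (Fin.cons u y) := by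
        refine lintegral_congr fun u => lintegral_congr fun y => ?_
        rw [he, e_symm_apply]

lemma integrable_pin_succ (f : (Fin (n+1) → ℝ) → ℝ)
    (hf : Integrable f (volume.restrict (pin (n+1)))) :
    Integrable (fun z : ℝ × (Fin n → ℝ) => f (Fin.cons z.1 z.2))
      (((volume : Measure ℝ).restrict (Ioi (0:ℝ))).prod
        ((volume : Measure (Fin n → ℝ)).restrict (pin n))) := by
  set e := MeasurableEquiv.piFinSuccAbove (fun _ : Fin (n+1) => ℝ) 0 with he
  have mp := e_measurePreserving (n := n)
  have := ((mp.symm e).integrable_comp_emb e.symm.measurableEmbedding).2 hf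
  have heq : (f ∘ e.symm) = fun z : ℝ × (Fin n → ℝ) => f (Fin.cons z.1 z.2) := by
    funext z
    simp only [Function.comp_apply, he]
    rw [show z = (z.1, z.2) from rfl, e_symm_apply]
  rwa [heq] at this

end Transfer

section Key1

variable {H : ℝ} {n : ℕ}

lemma key1 (H : ℝ) (n : ℕ) (f : (Fin (n+1) → ℝ) → ℝ≥0∞) (hf : Measurable f) :
    Bn H (n+1) f f = ∫⁻ y in pin n, ∫⁻ z in pin n, Kn H n y z *
      B1 H (fun u => f (Fin.cons u y)) (fun u => f (Fin.cons u z)) := by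
  have msec : Measurable (fun q : ℝ × (Fin n → ℝ) => f (Fin.cons q.1 q.2)) :=
    hf.comp measurable_cons
  have hK1 : Measurable (fun p : ℝ × ℝ => ENNReal.ofReal (|p.2 - p.1| ^ (2*H-2))) := by
    fun_prop
  have hW : Measurable (fun q : (ℝ × (Fin n → ℝ)) × (ℝ × (Fin n → ℝ)) =>
      f (Fin.cons q.1.1 q.1.2) * f (Fin.cons q.2.1 q.2.2) *
      (ENNReal.ofReal (|q.2.1 - q.1.1| ^ (2*H-2)) * Kn H n q.1.2 q.2.2)) := by
    refine Measurable.mul (Measurable.mul ?_ ?_) (Measurable.mul ?_ ?_)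
    · exact msec.comp measurable_fst
    · exact msec.comp measurable_snd
    · exact hK1.comp ((measurable_fst.comp measurable_fst).prodMk
        (measurable_fst.comp measurable_snd))
    · exact measurable_Kn' H n (measurable_snd.comp measurable_fst)
        (measurable_snd.comp measurable_snd)
  have hW1 : Measurable (fun q : ((ℝ × (Fin n → ℝ)) × (Fin n → ℝ)) × ℝ =>
      f (Fin.cons q.1.1.1 q.1.1.2) * f (Fin.cons q.2 q.1.2) *
      (ENNReal.ofReal (|q.2 - q.1.1.1| ^ (2*H-2)) * Kn H n q.1.1.2 q.1.2)) := by
    refine Measurable.mul (Measurable.mul ?_ ?_) (Measurable.mul ?_ ?_)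
    · exact msec.comp ((measurable_fst.comp (measurable_fst.comp measurable_fst)).prodMk
        (measurable_snd.comp (measurable_fst.comp measurable_fst)))
    · exact msec.comp (measurable_snd.prodMk (measurable_snd.comp measurable_fst))
    · exact hK1.comp ((measurable_fst.comp (measurable_fst.comp measurable_fst)).prodMk
        measurable_snd)
    · exact measurable_Kn' H n (measurable_snd.comp (measurable_fst.comp measurable_fst))
        (measurable_snd.comp measurable_fst)
  have hinner2 : Measurable (fun q : (ℝ × (Fin n → ℝ)) × (Fin n → ℝ) =>
      ∫⁻ v in Ioi (0:ℝ),
        f (Fin.cons q.1.1 q.1.2) * f (Fin.cons v q.2) *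
        (ENNReal.ofReal (|v - q.1.1| ^ (2*H-2)) * Kn H n q.1.2 q.2)) :=
    hW1.lintegral_prod_right' (ν := volume.restrict (Ioi (0:ℝ)))
  have hinner3 : Measurable (fun p : ℝ × (Fin n → ℝ) =>
      ∫⁻ z in pin n, ∫⁻ v in Ioi (0:ℝ),
        f (Fin.cons p.1 p.2) * f (Fin.cons v z) *
        (ENNReal.ofReal (|v - p.1| ^ (2*H-2)) * Kn H n p.2 z)) :=
    hinner2.lintegral_prod_right' (ν := volume.restrict (pin n))
  have hG : Measurable fun s : Fin (n+1) → ℝ =>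
      ∫⁻ t in pin (n+1), f s * f t * Kn H (n+1) s t :=
    (((hf.comp measurable_fst).mul (hf.comp measurable_snd)).mul
      (measurable_Kn' H (n+1) measurable_fst measurable_snd)).lintegral_prod_right'
      (ν := volume.restrict (pin (n+1)))
  calc Bn H (n+1) f f
      = ∫⁻ u in Ioi (0:ℝ), ∫⁻ y in pin n, ∫⁻ v in Ioi (0:ℝ), ∫⁻ z in pin n,
          f (Fin.cons u y) * f (Fin.cons v z) *
          (ENNReal.ofReal (|v - u| ^ (2*H-2)) * Kn H n y z) := by
        rw [Bn, lintegral_pin_succ _ hG]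
        refine lintegral_congr fun u => lintegral_congr fun y => ?_
        rw [lintegral_pin_succ (fun t => f (Fin.cons u y) * f t * Kn H (n+1) (Fin.cons u y) t)
          ((measurable_const.mul hf).mul
            (measurable_Kn' H (n+1) measurable_const measurable_id))]
        refine lintegral_congr fun v => lintegral_congr fun z => ?_
        rw [Kn_cons]
    _ = ∫⁻ u in Ioi (0:ℝ), ∫⁻ y in pin n, ∫⁻ z in pin n, ∫⁻ v in Ioi (0:ℝ),
          f (Fin.cons u y) * f (Fin.cons v z) *
          (ENNReal.ofReal (|v - u| ^ (2*H-2)) * Kn H n y z) := by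
        refine lintegral_congr fun u => lintegral_congr fun y => ?_
        refine lintegral_lintegral_swap (Measurable.aemeasurable ?_)
        have hm2 : Measurable (fun p : ℝ × (Fin n → ℝ) =>
            f (Fin.cons u y) * f (Fin.cons p.1 p.2) *
            (ENNReal.ofReal (|p.1 - u| ^ (2*H-2)) * Kn H n y p.2)) := by
          refine Measurable.mul (Measurable.mul ?_ ?_) (Measurable.mul ?_ ?_)
          · exact measurable_const
          · exact msec
          · exact hK1.comp (measurable_const.prodMk measurable_fst)
          · exact measurable_Kn' H n measurable_const measurable_snd
        exact hm2
    _ = ∫⁻ y in pin n, ∫⁻ u in Ioi (0:ℝ), ∫⁻ z in pin n, ∫⁻ v in Ioi (0:ℝ),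
          f (Fin.cons u y) * f (Fin.cons v z) *
          (ENNReal.ofReal (|v - u| ^ (2*H-2)) * Kn H n y z) := by
        exact lintegral_lintegral_swap hinner3.aemeasurable
    _ = ∫⁻ y in pin n, ∫⁻ z in pin n, ∫⁻ u in Ioi (0:ℝ), ∫⁻ v in Ioi (0:ℝ),
          f (Fin.cons u y) * f (Fin.cons v z) *
          (ENNReal.ofReal (|v - u| ^ (2*H-2)) * Kn H n y z) := by
        refine lintegral_congr fun y => ?_
        refine lintegral_lintegral_swap (Measurable.aemeasurable ?_)
        have hM : Measurable (fun q : (ℝ × (Fin n → ℝ)) × ℝ =>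
            f (Fin.cons q.1.1 y) * f (Fin.cons q.2 q.1.2) *
            (ENNReal.ofReal (|q.2 - q.1.1| ^ (2*H-2)) * Kn H n y q.1.2)) := by
          refine Measurable.mul (Measurable.mul ?_ ?_) (Measurable.mul ?_ ?_)
          · exact msec.comp ((measurable_fst.comp measurable_fst).prodMk measurable_const)
          · exact msec.comp (measurable_snd.prodMk (measurable_snd.comp measurable_fst))
          · exact hK1.comp ((measurable_fst.comp measurable_fst).prodMk measurable_snd)
          · exact measurable_Kn' H n measurable_const (measurable_snd.comp measurable_fst)
        exact hM.lintegral_prod_right' (ν := volume.restrict (Ioi (0:ℝ)))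
    _ = ∫⁻ y in pin n, ∫⁻ z in pin n, Kn H n y z *
          B1 H (fun u => f (Fin.cons u y)) (fun u => f (Fin.cons u z)) := by
        refine lintegral_congr fun y => lintegral_congr fun z => ?_
        have h1 : Measurable fun u : ℝ => ∫⁻ v in Ioi (0:ℝ),
            f (Fin.cons u y) * f (Fin.cons v z) *
            ENNReal.ofReal (|v - u| ^ (2*H-2)) := by
          have hM : Measurable (fun q : ℝ × ℝ =>
              f (Fin.cons q.1 y) * f (Fin.cons q.2 z) *
              ENNReal.ofReal (|q.2 - q.1| ^ (2*H-2))) := by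
            refine Measurable.mul (Measurable.mul ?_ ?_) ?_
            · exact msec.comp (measurable_fst.prodMk measurable_const)
            · exact msec.comp (measurable_snd.prodMk measurable_const)
            · exact hK1
          exact hM.lintegral_prod_right' (ν := volume.restrict (Ioi (0:ℝ)))
        simp only [B1]
        rw [← lintegral_const_mul _ h1]
        refine lintegral_congr fun u => ?_
        have h2 : Measurable fun v : ℝ =>
            f (Fin.cons u y) * f (Fin.cons v z) * ENNReal.ofReal (|v - u| ^ (2*H-2)) := by
          refine Measurable.mul (Measurable.mul ?_ ?_) ?_
          · exact measurable_const
          · exact msec.comp (measurable_id.prodMk measurable_const)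
          · exact hK1.comp (measurable_const.prodMk measurable_id)
        rw [← lintegral_const_mul _ h2]
        exact lintegral_congr fun v => by ring

end Key1

section Main

variable {H β : ℝ} (hH : 1/2 < H) (hH1 : H < 1) (hβ : 0 < β)

variable (hyp : ∀ φ : ℝ → ℝ, Measurable φ → (∀ a, 0 ≤ φ a) →
      Integrable (fun a => φ a ^ (1 / H)) (volume.restrict (Set.Ioi (0 : ℝ))) →
      (∫⁻ s in Set.Ioi (0 : ℝ), ∫⁻ t in Set.Ioi (0 : ℝ),
          ENNReal.ofReal (H * (2 * H - 1) * (φ s * φ t * |t - s| ^ (2 * H - 2))))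
        ≤ ENNReal.ofReal (β ^ 2 * (∫ a in Set.Ioi (0 : ℝ), φ a ^ (1 / H)) ^ (2 * H)))

include hH hH1 hβ hyp

lemma main : ∀ n : ℕ, ∀ φ : (Fin n → ℝ) → ℝ, Measurable φ → (∀ a, 0 ≤ φ a) →
    Integrable (fun a => φ a ^ (1 / H)) (volume.restrict (pin n)) →
    ENNReal.ofReal (H * (2 * H - 1)) ^ n *
      Bn H n (fun a => ENNReal.ofReal (φ a)) (fun a => ENNReal.ofReal (φ a))
    ≤ ENNReal.ofReal β ^ (2 * n) *
      (∫⁻ a in pin n, ENNReal.ofReal (φ a) ^ (1/H)) ^ (2*H) := by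
  intro n
  induction n with
  | zero =>
    intro φ hm hnn hint
    have hpin0 : pin 0 = (Set.univ : Set (Fin 0 → ℝ)) := by
      ext x
      simp only [pin, mem_pi, mem_univ, true_implies, iff_true]
      exact fun i => i.elim0
    have hμ : volume.restrict (pin 0) = (volume : Measure (Fin 0 → ℝ)) := by
      rw [hpin0, Measure.restrict_univ]
    have huniv : (volume : Measure (Fin 0 → ℝ)) Set.univ = 1 :=
      Measure.pi_empty_univ (fun _ : Fin 0 => (volume : Measure ℝ))
    rw [Bn, hμ]
    simp only [pow_zero, one_mul, mul_zero, lintegral_unique, huniv, mul_one, Kn_zero]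
    have hexp : (1/H) * (2*H) = 2 := by
      field_simp
    rw [← ENNReal.rpow_mul, hexp, rpow_two']
  | succ n ih =>
    intro φ hm hnn hint
    set α' := ENNReal.ofReal (H * (2 * H - 1)) with hα'
    have hα'top : α' ≠ ⊤ := ENNReal.ofReal_ne_top
    have hf : Measurable fun a : Fin (n+1) → ℝ => ENNReal.ofReal (φ a) := by fun_prop
    have msec : Measurable (fun q : ℝ × (Fin n → ℝ) => ENNReal.ofReal (φ (Fin.cons q.1 q.2))) :=
      hf.comp measurable_cons
    have hfp : Measurable fun a : Fin (n+1) → ℝ => ENNReal.ofReal (φ a) ^ (1/H) := by fun_prop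
    have hK1 : Measurable (fun p : ℝ × ℝ => ENNReal.ofReal (|p.2 - p.1| ^ (2*H-2))) := by
      fun_prop
    -- finiteness of the p-integral
    have hIp_eq : ENNReal.ofReal (∫ a in pin (n+1), φ a ^ (1/H))
        = ∫⁻ a in pin (n+1), ENNReal.ofReal (φ a) ^ (1/H) := by
      rw [ofReal_integral_eq_lintegral_ofReal hint
        (Filter.Eventually.of_forall fun a => Real.rpow_nonneg (hnn a) _)]
      exact lintegral_congr fun a => (ENNReal.ofReal_rpow_of_nonneg (hnn a) (by positivity)).symm
    have hIp_fin : (∫⁻ a in pin (n+1), ENNReal.ofReal (φ a) ^ (1/H)) ≠ ⊤ := by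
      rw [← hIp_eq]; exact ENNReal.ofReal_ne_top
    -- the sliced p-integral
    set N : (Fin n → ℝ) → ℝ≥0∞ :=
      fun y => ∫⁻ u in Ioi (0:ℝ), ENNReal.ofReal (φ (Fin.cons u y)) ^ (1/H) with hN
    have hNmeas : Measurable N := by
      have h1 : Measurable (fun q : (Fin n → ℝ) × ℝ =>
          ENNReal.ofReal (φ (Fin.cons q.2 q.1)) ^ (1/H)) :=
        (by fun_prop : Measurable fun x : ℝ≥0∞ => x ^ (1/H)).comp
          (msec.comp (measurable_snd.prodMk measurable_fst))
      exact h1.lintegral_prod_right' (ν := volume.restrict (Ioi (0:ℝ)))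
    have hIp_tr : ∫⁻ a in pin (n+1), ENNReal.ofReal (φ a) ^ (1/H)
        = ∫⁻ u in Ioi (0:ℝ), ∫⁻ y in pin n, ENNReal.ofReal (φ (Fin.cons u y)) ^ (1/H) :=
      lintegral_pin_succ _ hfp
    have hIp_swap : ∫⁻ y in pin n, N y
        = ∫⁻ a in pin (n+1), ENNReal.ofReal (φ a) ^ (1/H) := by
      rw [hIp_tr]
      refine (lintegral_lintegral_swap ?_).symm
      exact ((by fun_prop : Measurable fun x : ℝ≥0∞ => x ^ (1/H)).comp msec).aemeasurable
    have hNfin : ∀ᵐ y ∂(volume.restrict (pin n)), N y ≠ ⊤ := by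
      have := ae_lt_top hNmeas (by rw [hIp_swap]; exact hIp_fin)
      filter_upwards [this] with y hy using hy.ne
    have hsecint : ∀ᵐ y ∂(volume.restrict (pin n)),
        Integrable (fun u => φ (Fin.cons u y) ^ (1/H)) (volume.restrict (Ioi (0:ℝ))) := by
      have h2 := integrable_pin_succ (fun a => φ a ^ (1/H)) hint
      exact h2.prod_left_ae
    -- the reduced function g
    set g : (Fin n → ℝ) → ℝ := fun y => ((N y).toReal) ^ H with hg
    have hgmeas : Measurable g := hNmeas.ennreal_toReal.pow_const _
    have hgnn : ∀ y, 0 ≤ g y := fun y => Real.rpow_nonneg ENNReal.toReal_nonneg _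
    have hgofReal : ∀ᵐ y ∂(volume.restrict (pin n)), ENNReal.ofReal (g y) = N y ^ H := by
      filter_upwards [hNfin] with y hy
      rw [hg]
      rw [← ENNReal.ofReal_rpow_of_nonneg ENNReal.toReal_nonneg (by linarith),
        ENNReal.ofReal_toReal hy]
    have hgp : ∀ y, g y ^ (1/H) = (N y).toReal := by
      intro y
      rw [hg, ← Real.rpow_mul ENNReal.toReal_nonneg]
      rw [show H * (1/H) = 1 by field_simp, Real.rpow_one]
    have hgint : Integrable (fun y => g y ^ (1/H)) (volume.restrict (pin n)) := by
      have : (fun y => g y ^ (1/H)) = fun y => (N y).toReal := funext hgp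
      rw [this]
      exact integrable_toReal_of_lintegral_ne_top hNmeas.aemeasurable
        (by rw [hIp_swap]; exact hIp_fin)
    have hkey1 := key1 H n (fun a => ENNReal.ofReal (φ a)) hf
    -- the inequality chain
    set b := ENNReal.ofReal β with hb
    have hb2top : b ^ 2 ≠ ⊤ := ENNReal.pow_ne_top ENNReal.ofReal_ne_top
    calc α' ^ (n+1) *
        Bn H (n+1) (fun a => ENNReal.ofReal (φ a)) (fun a => ENNReal.ofReal (φ a))
        = α' ^ n * ∫⁻ y in pin n, ∫⁻ z in pin n, Kn H n y z *
            (α' * B1 H (fun u => ENNReal.ofReal (φ (Fin.cons u y)))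
                      (fun u => ENNReal.ofReal (φ (Fin.cons u z)))) := by
          rw [hkey1, pow_succ, mul_assoc, ← lintegral_const_mul' α' _ hα'top]
          congr 1
          refine lintegral_congr fun y => ?_
          rw [← lintegral_const_mul' α' _ hα'top]
          exact lintegral_congr fun z => by ring
      _ ≤ α' ^ n * ∫⁻ y in pin n, ∫⁻ z in pin n, Kn H n y z *
            (b ^ 2 * (N y ^ H * N z ^ H)) := by
          refine mul_le_mul_right (lintegral_mono_ae ?_) _
          filter_upwards [hsecint] with y hy
          refine lintegral_mono_ae ?_
          filter_upwards [hsecint] with z hz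
          refine mul_le_mul_right ?_ _
          exact oneD2 hH hH1 hβ hyp
            (hm.comp (measurable_cons.comp (measurable_id.prodMk measurable_const)))
            (fun u => hnn _) hy
            (hm.comp (measurable_cons.comp (measurable_id.prodMk measurable_const)))
            (fun u => hnn _) hz
      _ = b ^ 2 * (α' ^ n * Bn H n (fun y => N y ^ H) (fun y => N y ^ H)) := by
          have hX : ∫⁻ y in pin n, ∫⁻ z in pin n, Kn H n y z * (b ^ 2 * (N y ^ H * N z ^ H))
              = b ^ 2 * ∫⁻ y in pin n, ∫⁻ z in pin n, N y ^ H * N z ^ H * Kn H n y z := by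
            rw [← lintegral_const_mul' (b ^ 2) _ hb2top]
            refine lintegral_congr fun y => ?_
            rw [← lintegral_const_mul' (b ^ 2) _ hb2top]
            exact lintegral_congr fun z => by ring
          rw [hX]
          simp only [Bn]
          ring
      _ = b ^ 2 * (α' ^ n *
            Bn H n (fun y => ENNReal.ofReal (g y)) (fun y => ENNReal.ofReal (g y))) := by
          congr 2
          rw [Bn, Bn]
          refine lintegral_congr_ae ?_
          filter_upwards [hgofReal] with y hy
          refine lintegral_congr_ae ?_
          filter_upwards [hgofReal] with z hz
          rw [hy, hz]
      _ ≤ b ^ 2 * (b ^ (2 * n) *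
            (∫⁻ y in pin n, ENNReal.ofReal (g y) ^ (1/H)) ^ (2*H)) :=
          mul_le_mul_right (ih g hgmeas hgnn hgint) _
      _ = b ^ (2 * (n+1)) *
            (∫⁻ a in pin (n+1), ENNReal.ofReal (φ a) ^ (1/H)) ^ (2*H) := by
          have hgi : ∫⁻ y in pin n, ENNReal.ofReal (g y) ^ (1/H)
              = ∫⁻ y in pin n, N y := by
            refine lintegral_congr_ae ?_
            filter_upwards [hNfin] with y hy
            rw [ENNReal.ofReal_rpow_of_nonneg (hgnn y) (by positivity), hgp y,
              ENNReal.ofReal_toReal hy]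
          rw [hgi, hIp_swap, ← mul_assoc, ← pow_add]
          ring_nf

end Main

end TensorAux


/-- If `β > 0` satisfies
`α_H ∫₀^∞∫₀^∞ φ(s)φ(t)|t-s|^{2H-2} ds dt ≤ β² (∫₀^∞ φ(t)^{1/H} dt)^{2H}`
for every nonnegative `φ ∈ L^{1/H}(ℝ₊)` (where `α_H = H(2H-1)`, `1/2 < H < 1`), then for
every `n ≥ 1` and every nonnegative `φ ∈ L^{1/H}(ℝ₊^n)`:
`α_H^n ∫ φ(𝐬)φ(𝐭) ∏_j |t_j-s_j|^{2H-2} d𝐬 d𝐭 ≤ β^{2n} (∫ φ^{1/H})^{2H}`. -/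
theorem tensorization_fractional_inequality (H β : ℝ) (hH : 1 / 2 < H) (hH1 : H < 1)
    (hβ : 0 < β)
    (hyp : ∀ φ : ℝ → ℝ, Measurable φ → (∀ a, 0 ≤ φ a) →
      Integrable (fun a => φ a ^ (1 / H)) (volume.restrict (Set.Ioi (0 : ℝ))) →
      (∫⁻ s in Set.Ioi (0 : ℝ), ∫⁻ t in Set.Ioi (0 : ℝ),
          ENNReal.ofReal (H * (2 * H - 1) * (φ s * φ t * |t - s| ^ (2 * H - 2))))
        ≤ ENNReal.ofReal (β ^ 2 * (∫ a in Set.Ioi (0 : ℝ), φ a ^ (1 / H)) ^ (2 * H))) :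
    ∀ (n : ℕ), 1 ≤ n → ∀ φ : (Fin n → ℝ) → ℝ, Measurable φ → (∀ a, 0 ≤ φ a) →
      Integrable (fun a => φ a ^ (1 / H))
        (volume.restrict (Set.univ.pi fun _ : Fin n => Set.Ioi (0 : ℝ))) →
      (∫⁻ s in Set.univ.pi (fun _ : Fin n => Set.Ioi (0 : ℝ)),
          ∫⁻ t in Set.univ.pi (fun _ : Fin n => Set.Ioi (0 : ℝ)),
          ENNReal.ofReal ((H * (2 * H - 1)) ^ n *
            (φ s * φ t * ∏ j : Fin n, |t j - s j| ^ (2 * H - 2))))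
        ≤ ENNReal.ofReal (β ^ (2 * n) *
            (∫ a in Set.univ.pi (fun _ : Fin n => Set.Ioi (0 : ℝ)), φ a ^ (1 / H)) ^ (2 * H)) := by
  intro n _hn φ hm hnn hint
  have hα : 0 ≤ H * (2 * H - 1) := by nlinarith
  have hint' : Integrable (fun a => φ a ^ (1 / H)) (volume.restrict (TensorAux.pin n)) := hint
  have hL : (∫⁻ s in Set.univ.pi (fun _ : Fin n => Set.Ioi (0 : ℝ)),
        ∫⁻ t in Set.univ.pi (fun _ : Fin n => Set.Ioi (0 : ℝ)),
        ENNReal.ofReal ((H * (2 * H - 1)) ^ n *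
          (φ s * φ t * ∏ j : Fin n, |t j - s j| ^ (2 * H - 2))))
      = ENNReal.ofReal (H * (2 * H - 1)) ^ n *
        TensorAux.Bn H n (fun a => ENNReal.ofReal (φ a)) (fun a => ENNReal.ofReal (φ a)) := by
    rw [TensorAux.Bn,
      ← lintegral_const_mul' _ _ (ENNReal.pow_ne_top ENNReal.ofReal_ne_top)]
    refine lintegral_congr fun s => ?_
    rw [← lintegral_const_mul' _ _ (ENNReal.pow_ne_top ENNReal.ofReal_ne_top)]
    refine lintegral_congr fun t => ?_
    rw [ENNReal.ofReal_mul (pow_nonneg hα n), ENNReal.ofReal_pow hα,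
      ENNReal.ofReal_mul (mul_nonneg (hnn s) (hnn t)), ENNReal.ofReal_mul (hnn s),
      TensorAux.ofReal_prod_Kn]
  have hI : 0 ≤ ∫ a in Set.univ.pi (fun _ : Fin n => Set.Ioi (0 : ℝ)), φ a ^ (1 / H) :=
    integral_nonneg fun a => Real.rpow_nonneg (hnn a) _
  have hR : ENNReal.ofReal (β ^ (2 * n) *
        (∫ a in Set.univ.pi (fun _ : Fin n => Set.Ioi (0 : ℝ)), φ a ^ (1 / H)) ^ (2 * H))
      = ENNReal.ofReal β ^ (2 * n) *
        (∫⁻ a in TensorAux.pin n, ENNReal.ofReal (φ a) ^ (1 / H)) ^ (2 * H) := by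
    rw [ENNReal.ofReal_mul (by positivity), ENNReal.ofReal_pow hβ.le,
      ← ENNReal.ofReal_rpow_of_nonneg hI (by linarith),
      ofReal_integral_eq_lintegral_ofReal hint
        (Filter.Eventually.of_forall fun a => Real.rpow_nonneg (hnn a) _)]
    congr 1
    refine congrArg (· ^ (2 * H)) (lintegral_congr fun a => ?_)
    rw [ENNReal.ofReal_rpow_of_nonneg (hnn a) (by positivity)]
  rw [hL, hR]
  exact TensorAux.main hH hH1 hβ hyp n φ hm hnn hint'
end TensorAux
end

section
/- Let H ∈ (1/2,1), a > 0, δ > 0 and s ≥ 0. Then (1/(2δ)) · (s^{2H} + |s−δ−a|^{2H} − |s−a|^{2H} − |s−δ|^{2H}) ≤ 2H s^{2H−1} + H (a^{2H−1} + 1). -/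
open Real Set Filter

/-- Subadditivity of `rpow` with exponent in `[0,1]` on nonnegative reals. -/
private lemma rpow_add_le_add_rpow' {x y q : ℝ} (hx : 0 ≤ x) (hy : 0 ≤ y)
    (h0 : 0 ≤ q) (h1 : q ≤ 1) : (x + y) ^ q ≤ x ^ q + y ^ q := by
  have h := NNReal.coe_le_coe.2
    (NNReal.rpow_add_le_add_rpow x.toNNReal y.toNNReal h0 h1)
  simpa [NNReal.coe_rpow, Real.coe_toNNReal, hx, hy, add_nonneg hx hy,
    Real.toNNReal_add hx hy] using h

/-- Derivative of `|x| ^ p` for `p > 1`. -/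
private lemma hasDerivAt_abs_rpow' {p : ℝ} (hp : 1 < p) (t : ℝ) :
    HasDerivAt (fun x : ℝ => |x| ^ p) (Real.sign t * (p * |t| ^ (p - 1))) t := by
  rcases lt_trichotomy t 0 with ht | rfl | ht
  · have h1 : HasDerivAt (fun x : ℝ => (-x) ^ p) (p * (-t) ^ (p - 1) * (-1)) t :=
      (Real.hasDerivAt_rpow_const (x := -t) (p := p)
        (Or.inl (by linarith))).comp t (hasDerivAt_neg t)
    have heq : (fun x : ℝ => |x| ^ p) =ᶠ[nhds t] fun x : ℝ => (-x) ^ p := by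
      filter_upwards [Iio_mem_nhds ht] with x hx
      rw [abs_of_neg hx]
    have h2 := h1.congr_of_eventuallyEq heq
    refine h2.congr_deriv ?_
    rw [Real.sign_of_neg ht, abs_of_neg ht]
    ring
  · -- t = 0
    rw [Real.sign_zero, zero_mul]
    rw [hasDerivAt_iff_tendsto_slope]
    have hb : Tendsto (fun z : ℝ => |z| ^ (p - 1)) (nhdsWithin 0 {(0:ℝ)}ᶜ) (nhds 0) := by
      have hc : ContinuousAt (fun z : ℝ => |z| ^ (p - 1)) 0 :=
        ContinuousAt.rpow_const continuous_abs.continuousAt (Or.inr (by linarith))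
      have h3 : Tendsto (fun z : ℝ => |z| ^ (p - 1)) (nhds 0) (nhds (|(0:ℝ)| ^ (p - 1))) := hc
      simpa [Real.zero_rpow (by linarith : p - 1 ≠ 0)] using h3.mono_left nhdsWithin_le_nhds
    refine squeeze_zero_norm' ?_ hb
    filter_upwards [self_mem_nhdsWithin] with z hz
    have hz0 : z ≠ 0 := hz
    have hza : (0:ℝ) < |z| := abs_pos.2 hz0
    have hsl : slope (fun x : ℝ => |x| ^ p) 0 z = |z| ^ p / z := by
      simp [slope_def_field, Real.zero_rpow (by linarith : p ≠ 0)]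
    rw [hsl, Real.norm_eq_abs, abs_div, abs_of_nonneg (Real.rpow_nonneg (abs_nonneg z) p),
      div_le_iff₀ hza, ← Real.rpow_add_one (ne_of_gt hza)]
    simp
  · have h1 : HasDerivAt (fun x : ℝ => x ^ p) (p * t ^ (p - 1)) t :=
      Real.hasDerivAt_rpow_const (Or.inl (ne_of_gt ht))
    have heq : (fun x : ℝ => |x| ^ p) =ᶠ[nhds t] fun x : ℝ => x ^ p := by
      filter_upwards [Ioi_mem_nhds ht] with x hx
      rw [abs_of_pos hx]
    have h2 := h1.congr_of_eventuallyEq heq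
    refine h2.congr_deriv ?_
    rw [Real.sign_of_pos ht, abs_of_pos ht]
    ring

/-- Pointwise bound on the derivative difference. -/
private lemma sign_rpow_diff_le {q a s u : ℝ} (hq0 : 0 < q) (hq1 : q ≤ 1)
    (ha : 0 < a) (hs : 0 ≤ s) (hu : u ≤ s) :
    Real.sign u * |u| ^ q - Real.sign (u - a) * |u - a| ^ q ≤ s ^ q + a ^ q := by
  rcases le_or_gt u 0 with hu0 | hu0
  · -- u ≤ 0 : LHS = (a - u)^q - (-u)^q ≤ a^q
    have hua : u - a < 0 := by linarith
    have h1 : Real.sign u * |u| ^ q = -(-u) ^ q := by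
      rcases eq_or_lt_of_le hu0 with h | h
      · simp [h, Real.zero_rpow (ne_of_gt hq0)]
      · rw [Real.sign_of_neg h, abs_of_neg h]; ring
    have h2 : Real.sign (u - a) * |u - a| ^ q = -(-(u - a)) ^ q := by
      rw [Real.sign_of_neg hua, abs_of_neg hua]; ring
    rw [h1, h2]
    have hsub : (a + -u) ^ q ≤ a ^ q + (-u) ^ q :=
      rpow_add_le_add_rpow' (le_of_lt ha) (by linarith) (le_of_lt hq0) hq1
    have he : -(u - a) = a + -u := by ring
    have hspos : 0 ≤ s ^ q := Real.rpow_nonneg hs q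
    rw [he]
    linarith
  · -- u > 0
    have h1 : Real.sign u * |u| ^ q = u ^ q := by
      rw [Real.sign_of_pos hu0, abs_of_pos hu0]; ring
    have h2 : u ^ q ≤ s ^ q := Real.rpow_le_rpow (le_of_lt hu0) hu hq0.le
    have h3 : -(Real.sign (u - a) * |u - a| ^ q) ≤ a ^ q := by
      rcases lt_trichotomy u a with h | h | h
      · have hn : u - a < 0 := by linarith
        rw [Real.sign_of_neg hn, abs_of_neg hn]
        have hle : -(u - a) ≤ a := by linarith
        calc -(-1 * (-(u - a)) ^ q) = (-(u - a)) ^ q := by ring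
          _ ≤ a ^ q := Real.rpow_le_rpow (by linarith) hle hq0.le
      · simp [h, Real.rpow_nonneg ha.le]
      · have hpos : 0 < u - a := by linarith
        rw [Real.sign_of_pos hpos]
        have h4 := Real.rpow_nonneg (abs_nonneg (u - a)) q
        have h5 := Real.rpow_nonneg ha.le q
        linarith
    rw [h1]
    linarith

/-- For `H ∈ (1/2,1)`, `a > 0`, `δ > 0`, `s ≥ 0`:
`(1/(2δ))(s^{2H} + |s-δ-a|^{2H} - |s-a|^{2H} - |s-δ|^{2H}) ≤ 2H s^{2H-1} + H(a^{2H-1}+1)`. -/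
theorem fbm_increment_bound (H a δ s : ℝ) (hH : 1 / 2 < H) (hH1 : H < 1)
    (ha : 0 < a) (hδ : 0 < δ) (hs : 0 ≤ s) :
    (1 / (2 * δ)) * (s ^ (2 * H) + |s - δ - a| ^ (2 * H)
        - |s - a| ^ (2 * H) - |s - δ| ^ (2 * H))
      ≤ 2 * H * s ^ (2 * H - 1) + H * (a ^ (2 * H - 1) + 1) := by
  have hp : 1 < 2 * H := by linarith
  set q : ℝ := 2 * H - 1 with hq_def
  have hq0 : 0 < q := by rw [hq_def]; linarith
  have hq1 : q ≤ 1 := by rw [hq_def]; linarith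
  set G : ℝ → ℝ := fun t => |t| ^ (2 * H) - |t - a| ^ (2 * H) with hG_def
  set φ : ℝ → ℝ := fun t => Real.sign t * (2 * H * |t| ^ q) with hφ_def
  have hG' : ∀ t : ℝ, HasDerivAt G (φ t - φ (t - a)) t := by
    intro t
    have h1 := hasDerivAt_abs_rpow' hp t
    have h2 : HasDerivAt (fun x : ℝ => |x - a| ^ (2 * H)) (φ (t - a)) t := by
      have h3 := (hasDerivAt_abs_rpow' hp (t - a)).comp t
        ((hasDerivAt_id t).sub_const a)
      simpa [hφ_def, hq_def, Function.comp_def] using h3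
    have h4 : φ t = Real.sign t * (2 * H * |t| ^ (2 * H - 1)) := by rw [hφ_def, hq_def]
    rw [hG_def]
    exact h4 ▸ (h1.sub h2)
  have hlt : s - δ < s := by linarith
  obtain ⟨c, hc, hceq⟩ := exists_hasDerivAt_eq_slope G (fun t => φ t - φ (t - a)) hlt
    (fun t _ => (hG' t).continuousAt.continuousWithinAt) (fun t _ => hG' t)
  have hcs : c ≤ s := hc.2.le
  have hφbound : φ c - φ (c - a) ≤ 2 * H * (s ^ q + a ^ q) := by
    have h5 := sign_rpow_diff_le hq0 hq1 ha hs hcs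
    have hH0 : (0:ℝ) < 2 * H := by linarith
    rw [hφ_def]
    simp only []
    calc Real.sign c * (2 * H * |c| ^ q) - Real.sign (c - a) * (2 * H * |c - a| ^ q)
        = 2 * H * (Real.sign c * |c| ^ q - Real.sign (c - a) * |c - a| ^ q) := by ring
      _ ≤ 2 * H * (s ^ q + a ^ q) := by
          exact mul_le_mul_of_nonneg_left h5 hH0.le
  have hGdiff : G s - G (s - δ) ≤ δ * (2 * H * (s ^ q + a ^ q)) := by
    have h6 : φ c - φ (c - a) = (G s - G (s - δ)) / (s - (s - δ)) := hceq
    have hδ' : s - (s - δ) = δ := by ring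
    rw [hδ', eq_comm, div_eq_iff (ne_of_gt hδ)] at h6
    rw [h6]
    have := mul_le_mul_of_nonneg_right hφbound hδ.le
    linarith
  have hGs : G s = s ^ (2 * H) - |s - a| ^ (2 * H) := by
    rw [hG_def]; simp [abs_of_nonneg hs]
  have hGsδ : G (s - δ) = |s - δ| ^ (2 * H) - |s - δ - a| ^ (2 * H) := by rw [hG_def]
  have key : s ^ (2 * H) + |s - δ - a| ^ (2 * H) - |s - a| ^ (2 * H) - |s - δ| ^ (2 * H)
      ≤ δ * (2 * H * (s ^ q + a ^ q)) := by
    rw [hGs, hGsδ] at hGdiff; linarith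
  have h2δ : (0:ℝ) < 2 * δ := by linarith
  rw [div_mul_eq_mul_div, one_mul, div_le_iff₀ h2δ]
  have hsq : 0 ≤ s ^ q := Real.rpow_nonneg hs q
  have haq : 0 ≤ a ^ q := Real.rpow_nonneg ha.le q
  have hH0 : 0 < H := by linarith
  calc s ^ (2 * H) + |s - δ - a| ^ (2 * H) - |s - a| ^ (2 * H) - |s - δ| ^ (2 * H)
      ≤ δ * (2 * H * (s ^ q + a ^ q)) := key
    _ ≤ (2 * H * s ^ (2 * H - 1) + H * (a ^ (2 * H - 1) + 1)) * (2 * δ) := by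
        rw [hq_def]
        nlinarith [mul_nonneg (mul_nonneg hδ.le (by linarith : (0:ℝ) ≤ H)) hsq, mul_pos hδ hH0]
end
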